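/- arXiv:2604.00351 — 10 statements merged into one kernel-verified Lean document; each statement's English description precedes it below -/
import Mathlib

section
/- Assume that for every distinguished three-element set E ⊆ ℂ the six-element set E ∪ {1, −1, ∞} ⊆ ℂ ∪ {∞} is splittable. Then every six-element set A ⊆ ℂ ∪ {∞} is splittable. -/
open OnePoint Set

noncomputable section

/-- The set Ω = {z : |z-1| < 2} ∪ {z : |z+1| < 2}. -/
def OmegaSet : Set ℂ := {z | ‖z - 1‖ < 2} ∪ {z | ‖z + 1‖ < 2}

/-- A three-element set `E ⊆ ℂ` is distinguished if it misses `Ω` and its points are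
pairwise at distance at least 2. -/
def Distinguished (E : Set ℂ) : Prop :=
  E.ncard = 3 ∧ E ∩ OmegaSet = ∅ ∧
    ∀ z ∈ E, ∀ w ∈ E, z ≠ w → 2 ≤ ‖z - w‖

/-- The closed half-strip Σ = {z : Re z ≥ 0, |Im z| ≤ 1}. -/
def HalfStrip : Set ℂ := {z | 0 ≤ z.re ∧ |z.im| ≤ 1}

/-- Two complex numbers are approximately collinear if some rotation puts both in Σ. -/
def ApproxCollinear (z w : ℂ) : Prop :=
  ∃ a : ℂ, ‖a‖ = 1 ∧ z / a ∈ HalfStrip ∧ w / a ∈ HalfStrip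

/-- A set `E ⊆ ℂ` is splittable by a strip. -/
def SplittableByStrip (E : Set ℂ) : Prop :=
  ∃ a : ℂ, ‖a‖ = 1 ∧ (∀ z ∈ E, 1 < |(z / a).im|) ∧
    ∃ z ∈ E, ∃ w ∈ E, 1 < (z / a).im ∧ (w / a).im < -1

/-- `DiamDisc z w` is the closed disc having `z` and `w` as endpoints of a diameter. -/
def DiamDisc (z w : ℂ) : Set ℂ :=
  {u | ‖u - (z + w) / 2‖ ≤ ‖z - w‖ / 2}

/-- A three-element set is well-separated from zero if `F(z,w)` misses the closed unit
disc for every pair of approximately collinear points `z, w ∈ E`. -/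
def WellSeparatedFromZero (E : Set ℂ) : Prop :=
  ∀ z ∈ E, ∀ w ∈ E, ApproxCollinear z w →
    DiamDisc z w ∩ {u : ℂ | ‖u‖ ≤ 1} = ∅

/-- A closed disc in the Riemann sphere `ℂ ∪ {∞}`. -/
def IsClosedDisc (D : Set (OnePoint ℂ)) : Prop :=
  (∃ c : ℂ, ∃ r : ℝ, 0 < r ∧
      D = (fun z : ℂ => (z : OnePoint ℂ)) '' {z | ‖z - c‖ ≤ r}) ∨
  (∃ c : ℂ, ∃ r : ℝ, 0 < r ∧
      D = {∞} ∪ (fun z : ℂ => (z : OnePoint ℂ)) '' {z | r ≤ ‖z - c‖}) ∨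
  (∃ a : ℂ, a ≠ 0 ∧ ∃ t : ℝ,
      D = {∞} ∪ (fun z : ℂ => (z : OnePoint ℂ)) '' {z | t ≤ (z * (starRingEnd ℂ) a).re})

/-- A set `A` in the Riemann sphere is splittable if three pairwise disjoint closed
discs each contain exactly two points of `A`. -/
def Splittable (A : Set (OnePoint ℂ)) : Prop :=
  ∃ D₁ D₂ D₃ : Set (OnePoint ℂ),
    IsClosedDisc D₁ ∧ IsClosedDisc D₂ ∧ IsClosedDisc D₃ ∧
    Disjoint D₁ D₂ ∧ Disjoint D₁ D₃ ∧ Disjoint D₂ D₃ ∧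
    (D₁ ∩ A).ncard = 2 ∧ (D₂ ∩ A).ncard = 2 ∧ (D₃ ∩ A).ncard = 2

def QDFin (A : ℝ) (b : ℂ) (C : ℝ) : Set ℂ :=
  {z | A * Complex.normSq z - 2 * (z * (starRingEnd ℂ) b).re + C ≤ 0}

def QuadDisc (A : ℝ) (b : ℂ) (C : ℝ) : Set (OnePoint ℂ) :=
  (fun z : ℂ => (z : OnePoint ℂ)) '' QDFin A b C ∪ (if A ≤ 0 then {∞} else ∅)

lemma infty_mem_quadDisc {A : ℝ} {b : ℂ} {C : ℝ} : ∞ ∈ QuadDisc A b C ↔ A ≤ 0 := by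
  simp only [QuadDisc, Set.mem_union, Set.mem_image]
  constructor
  · rintro (⟨z, _, hz⟩ | h)
    · exact absurd hz (OnePoint.coe_ne_infty z)
    · by_contra hA; rw [if_neg hA] at h; exact h
  · intro h; right; rw [if_pos h]; rfl

lemma coe_mem_quadDisc {A : ℝ} {b : ℂ} {C : ℝ} {z : ℂ} :
    (z : OnePoint ℂ) ∈ QuadDisc A b C ↔ z ∈ QDFin A b C := by
  simp only [QuadDisc, Set.mem_union, Set.mem_image]
  constructor
  · rintro (⟨w, hw, hwz⟩ | h)
    · rwa [show w = z from OnePoint.coe_injective hwz] at hw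
    · split_ifs at h with hA
      · exact absurd h (OnePoint.coe_ne_infty z)
      · exact absurd h (Set.notMem_empty _)
  · intro h; exact Or.inl ⟨z, h, rfl⟩

lemma mem_QDFin {A : ℝ} {b : ℂ} {C : ℝ} {z : ℂ} :
    z ∈ QDFin A b C ↔ A * Complex.normSq z - 2 * (z * (starRingEnd ℂ) b).re + C ≤ 0 :=
  Iff.rfl

lemma quad_of_closedDisc {D : Set (OnePoint ℂ)} (h : IsClosedDisc D) :
    ∃ A : ℝ, ∃ b : ℂ, ∃ C : ℝ, A * C < Complex.normSq b ∧ D = QuadDisc A b C := by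
  rcases h with ⟨c, r, hr, rfl⟩ | ⟨c, r, hr, rfl⟩ | ⟨a, ha, t, rfl⟩
  · refine ⟨1, c, Complex.normSq c - r ^ 2, by nlinarith [Complex.normSq_nonneg c], ?_⟩
    ext w
    cases w with
    | infty =>
      simp only [Set.mem_image, infty_mem_quadDisc]
      norm_num
    | coe z =>
      rw [coe_mem_quadDisc, mem_QDFin]
      simp only [Set.mem_image, Set.mem_setOf_eq]
      have hns : Complex.normSq (z - c) =
          Complex.normSq z - 2 * (z * (starRingEnd ℂ) c).re + Complex.normSq c :=
        by rw [Complex.normSq_sub]; ring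
      constructor
      · rintro ⟨w, hw, hwz⟩
        obtain rfl := OnePoint.coe_injective hwz
        have h2 : Complex.normSq (w - c) ≤ r ^ 2 := by
          nlinarith [Complex.sq_norm (w - c), norm_nonneg (w - c)]
        rw [hns] at h2; linarith
      · intro hzz
        refine ⟨z, ?_, rfl⟩
        have h2 : Complex.normSq (z - c) ≤ r ^ 2 := by rw [hns]; linarith
        rw [← Complex.sq_norm] at h2
        nlinarith [norm_nonneg (z - c)]
  · refine ⟨-1, -c, r ^ 2 - Complex.normSq c, by simp [Complex.normSq_neg]; nlinarith, ?_⟩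
    ext w
    cases w with
    | infty =>
      simp only [Set.mem_union, Set.mem_singleton_iff, infty_mem_quadDisc]
      norm_num
    | coe w =>
      rw [coe_mem_quadDisc, mem_QDFin]
      simp only [Set.mem_union, Set.mem_singleton_iff, Set.mem_image, Set.mem_setOf_eq]
      have hns : Complex.normSq (w - c) =
          Complex.normSq w - 2 * (w * (starRingEnd ℂ) c).re + Complex.normSq c :=
        by rw [Complex.normSq_sub]; ring
      have hcnj : (w * (starRingEnd ℂ) (-c)).re = -(w * (starRingEnd ℂ) c).re := by
        rw [map_neg, mul_neg, Complex.neg_re]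
      constructor
      · rintro ((h | ⟨z, hz, hzw⟩))
        · exact absurd h (OnePoint.coe_ne_infty w)
        · obtain rfl := OnePoint.coe_injective hzw
          have h2 : r ^ 2 ≤ Complex.normSq (z - c) := by
            nlinarith [Complex.sq_norm (z - c), norm_nonneg (z - c)]
          rw [hns] at h2; rw [hcnj]; nlinarith [Complex.normSq_nonneg z]
      · intro hzz
        right; refine ⟨w, ?_, rfl⟩
        rw [hcnj] at hzz
        have h2 : r ^ 2 ≤ Complex.normSq (w - c) := by rw [hns]; nlinarith
        rw [← Complex.sq_norm] at h2
        nlinarith [norm_nonneg (w - c)]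
  · refine ⟨0, a, 2 * t, by simpa using Complex.normSq_pos.2 ha, ?_⟩
    ext w
    cases w with
    | infty =>
      simp only [Set.mem_union, Set.mem_singleton_iff, infty_mem_quadDisc]
      norm_num
    | coe w =>
      rw [coe_mem_quadDisc, mem_QDFin]
      simp only [Set.mem_union, Set.mem_singleton_iff, Set.mem_image, Set.mem_setOf_eq]
      constructor
      · rintro ((h | ⟨z, hz, hzw⟩))
        · exact absurd h (OnePoint.coe_ne_infty w)
        · obtain rfl := OnePoint.coe_injective hzw
          linarith
      · intro hzz
        right; exact ⟨w, by linarith, rfl⟩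

lemma closedDisc_of_quad {A : ℝ} {b : ℂ} {C : ℝ} (h : A * C < Complex.normSq b) :
    IsClosedDisc (QuadDisc A b C) := by
  rcases lt_trichotomy A 0 with hA | hA | hA
  · -- complement type
    right; left
    have hA' : (A : ℂ) ≠ 0 := by exact_mod_cast hA.ne
    have hA2 : (0 : ℝ) < A ^ 2 := by nlinarith
    set r := Real.sqrt (Complex.normSq b - A * C) / (-A) with hr_def
    have hrpos : 0 < r := div_pos (Real.sqrt_pos.2 (by linarith)) (by linarith)
    refine ⟨b / (A : ℂ), r, hrpos, ?_⟩
    have e1 : ∀ z : ℂ, Complex.normSq (z - b / (A : ℂ)) =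
        Complex.normSq z - 2 * (z * (starRingEnd ℂ) b).re / A + Complex.normSq b / A ^ 2 := by
      intro z
      have h2 : (z * (starRingEnd ℂ) (b / (A : ℂ))).re = (z * (starRingEnd ℂ) b).re / A := by
        rw [map_div₀, Complex.conj_ofReal, ← mul_div_assoc, Complex.div_ofReal_re]
      rw [Complex.normSq_sub, h2, Complex.normSq_div, Complex.normSq_ofReal]
      ring
    have e2 : r ^ 2 * A ^ 2 = Complex.normSq b - A * C := by
      rw [hr_def, div_pow, Real.sq_sqrt (by linarith), neg_sq, div_mul_cancel₀ _ hA2.ne']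
    ext w
    cases w with
    | infty =>
      simp only [infty_mem_quadDisc, Set.mem_union, Set.mem_singleton_iff, Set.mem_image]
      norm_num
      linarith
    | coe z =>
      rw [coe_mem_quadDisc, mem_QDFin]
      simp only [Set.mem_union, Set.mem_singleton_iff, Set.mem_image, Set.mem_setOf_eq]
      have h4 : A ^ 2 * ‖z - b / (A : ℂ)‖ ^ 2 =
          A ^ 2 * Complex.normSq z - 2 * A * (z * (starRingEnd ℂ) b).re + Complex.normSq b := by
        rw [Complex.sq_norm, e1]; field_simp [hA.ne]
      have key : A * Complex.normSq z - 2 * (z * (starRingEnd ℂ) b).re + C ≤ 0 ↔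
          r ≤ ‖z - b / (A : ℂ)‖ := by
        constructor
        · intro hz
          rw [← pow_le_pow_iff_left₀ hrpos.le (norm_nonneg _) (two_ne_zero)]
          nlinarith [mul_nonneg (neg_nonneg.2 hA.le) (neg_nonneg.2 hz)]
        · intro hz
          have hsq : r ^ 2 ≤ ‖z - b / (A : ℂ)‖ ^ 2 :=
            pow_le_pow_left₀ hrpos.le hz 2
          nlinarith [hsq]
      rw [key]
      constructor
      · intro hz; right; exact ⟨z, hz, rfl⟩
      · rintro (hz | ⟨u, hu, huz⟩)
        · exact absurd hz (OnePoint.coe_ne_infty z)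
        · obtain rfl := OnePoint.coe_injective huz; exact hu
  · -- half-plane
    right; right
    subst hA
    have hb : b ≠ 0 := by
      intro hb0; rw [hb0] at h; simp at h
    refine ⟨b, hb, C / 2, ?_⟩
    ext w
    cases w with
    | infty =>
      simp only [infty_mem_quadDisc, Set.mem_union, Set.mem_singleton_iff, Set.mem_image]
      norm_num
    | coe z =>
      rw [coe_mem_quadDisc, mem_QDFin]
      simp only [Set.mem_union, Set.mem_singleton_iff, Set.mem_image, Set.mem_setOf_eq]
      constructor
      · intro hz; right; exact ⟨z, by linarith, rfl⟩
      · rintro (hz | ⟨u, hu, huz⟩)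
        · exact absurd hz (OnePoint.coe_ne_infty z)
        · obtain rfl := OnePoint.coe_injective huz; linarith
  · -- finite disc
    left
    have hA' : (A : ℂ) ≠ 0 := by exact_mod_cast hA.ne'
    have hA2 : (0 : ℝ) < A ^ 2 := by nlinarith
    set r := Real.sqrt (Complex.normSq b - A * C) / A with hr_def
    have hrpos : 0 < r := div_pos (Real.sqrt_pos.2 (by linarith)) hA
    refine ⟨b / (A : ℂ), r, hrpos, ?_⟩
    have e1 : ∀ z : ℂ, Complex.normSq (z - b / (A : ℂ)) =
        Complex.normSq z - 2 * (z * (starRingEnd ℂ) b).re / A + Complex.normSq b / A ^ 2 := by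
      intro z
      have h2 : (z * (starRingEnd ℂ) (b / (A : ℂ))).re = (z * (starRingEnd ℂ) b).re / A := by
        rw [map_div₀, Complex.conj_ofReal, ← mul_div_assoc, Complex.div_ofReal_re]
      rw [Complex.normSq_sub, h2, Complex.normSq_div, Complex.normSq_ofReal]
      ring
    have e2 : r ^ 2 * A ^ 2 = Complex.normSq b - A * C := by
      rw [hr_def, div_pow, Real.sq_sqrt (by linarith)]; field_simp
    ext w
    cases w with
    | infty =>
      simp only [infty_mem_quadDisc, Set.mem_image]
      norm_num
      linarith
    | coe z =>
      rw [coe_mem_quadDisc, mem_QDFin]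
      simp only [Set.mem_image, Set.mem_setOf_eq]
      have h4 : A ^ 2 * ‖z - b / (A : ℂ)‖ ^ 2 =
          A ^ 2 * Complex.normSq z - 2 * A * (z * (starRingEnd ℂ) b).re + Complex.normSq b := by
        rw [Complex.sq_norm, e1]; field_simp [hA.ne']
      have key : A * Complex.normSq z - 2 * (z * (starRingEnd ℂ) b).re + C ≤ 0 ↔
          ‖z - b / (A : ℂ)‖ ≤ r := by
        constructor
        · intro hz
          rw [← pow_le_pow_iff_left₀ (norm_nonneg _) hrpos.le (two_ne_zero)]
          nlinarith [mul_nonneg hA.le (neg_nonneg.2 hz)]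
        · intro hz
          have hsq : ‖z - b / (A : ℂ)‖ ^ 2 ≤ r ^ 2 :=
            pow_le_pow_left₀ (norm_nonneg _) hz 2
          nlinarith [hsq]
      rw [key]
      constructor
      · intro hz; exact ⟨z, hz, rfl⟩
      · rintro ⟨u, hu, huz⟩
        obtain rfl := OnePoint.coe_injective huz; exact hu

def sphInv : OnePoint ℂ → OnePoint ℂ
  | ∞ => ((0 : ℂ) : OnePoint ℂ)
  | (z : ℂ) => if z = 0 then ∞ else ((z⁻¹ : ℂ) : OnePoint ℂ)

def simMap (α β : ℂ) : OnePoint ℂ → OnePoint ℂ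
  | ∞ => ∞
  | (z : ℂ) => ((α * z + β : ℂ) : OnePoint ℂ)

@[simp] lemma sphInv_infty : sphInv ∞ = ((0:ℂ) : OnePoint ℂ) := rfl
@[simp] lemma sphInv_zero : sphInv ((0:ℂ) : OnePoint ℂ) = ∞ := by simp [sphInv]
lemma sphInv_coe {z : ℂ} (hz : z ≠ 0) : sphInv (z : OnePoint ℂ) = ((z⁻¹ : ℂ) : OnePoint ℂ) := by
  simp [sphInv, hz]
@[simp] lemma simMap_infty (α β : ℂ) : simMap α β ∞ = ∞ := rfl
@[simp] lemma simMap_coe (α β z : ℂ) : simMap α β (z : OnePoint ℂ) = ((α * z + β : ℂ) : OnePoint ℂ) := rfl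

lemma sphInv_involutive : Function.Involutive sphInv := by
  intro w
  cases w with
  | infty => simp
  | coe z =>
    by_cases hz : z = 0
    · simp [hz]
    · rw [sphInv_coe hz, sphInv_coe (inv_ne_zero hz), inv_inv]

lemma sphInv_image_quadDisc (A : ℝ) (b : ℂ) (C : ℝ) :
    sphInv '' QuadDisc A b C = QuadDisc C ((starRingEnd ℂ) b) A := by
  rw [Set.image_eq_preimage_of_inverse sphInv_involutive.leftInverse
    sphInv_involutive.rightInverse]
  ext w
  rw [Set.mem_preimage]
  cases w with
  | infty =>
    rw [sphInv_infty, coe_mem_quadDisc, mem_QDFin, infty_mem_quadDisc]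
    simp
  | coe z =>
    by_cases hz : z = 0
    · subst hz
      rw [sphInv_zero, infty_mem_quadDisc, coe_mem_quadDisc, mem_QDFin]
      simp
    · rw [sphInv_coe hz, coe_mem_quadDisc, coe_mem_quadDisc, mem_QDFin, mem_QDFin]
      have hz' : (0 : ℝ) < Complex.normSq z := Complex.normSq_pos.2 hz
      have e : (z⁻¹ * (starRingEnd ℂ) b).re = (z * b).re / Complex.normSq z := by
        have e' : z⁻¹ * (starRingEnd ℂ) b =
            ((starRingEnd ℂ) (b * z)) / ((Complex.normSq z : ℝ) : ℂ) := by
          rw [Complex.inv_def, map_mul]; push_cast; ring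
        rw [e', Complex.div_ofReal_re, Complex.conj_re, mul_comm]
      have e2 : Complex.normSq z⁻¹ = (Complex.normSq z)⁻¹ := by
        simp [Complex.normSq_inv]
      have e3 : (z * (starRingEnd ℂ) ((starRingEnd ℂ) b)).re = (z * b).re := by
        rw [Complex.conj_conj]
      rw [e, e2, e3]
      have h2 : (A * (Complex.normSq z)⁻¹ - 2 * ((z * b).re / Complex.normSq z) + C)
          * Complex.normSq z = C * Complex.normSq z - 2 * (z * b).re + A := by
        field_simp; ring
      constructor
      · intro hle
        have h3 := mul_nonpos_of_nonpos_of_nonneg hle hz'.le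
        rw [h2] at h3; linarith
      · intro hle
        rw [← h2] at hle
        nlinarith [hle, hz']

lemma simMap_image_quadDisc {α : ℂ} (hα : α ≠ 0) (β : ℂ) (A : ℝ) (b : ℂ) (C : ℝ) :
    simMap α β '' QuadDisc A b C =
      QuadDisc A ((A : ℂ) * β + α * b)
        (A * Complex.normSq β + 2 * (β * (starRingEnd ℂ) α * (starRingEnd ℂ) b).re
          + C * Complex.normSq α) := by
  have hns : (0 : ℝ) < Complex.normSq α := Complex.normSq_pos.2 hα
  have key : ∀ z : ℂ, z ∈ QDFin A b C ↔ (α * z + β) ∈ QDFin A ((A : ℂ) * β + α * b)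
      (A * Complex.normSq β + 2 * (β * (starRingEnd ℂ) α * (starRingEnd ℂ) b).re
        + C * Complex.normSq α) := by
    intro z
    rw [mem_QDFin, mem_QDFin]
    have id1 : A * Complex.normSq (α * z + β)
        - 2 * ((α * z + β) * (starRingEnd ℂ) ((A : ℂ) * β + α * b)).re
        + (A * Complex.normSq β + 2 * (β * (starRingEnd ℂ) α * (starRingEnd ℂ) b).re
          + C * Complex.normSq α)
        = Complex.normSq α * (A * Complex.normSq z - 2 * (z * (starRingEnd ℂ) b).re + C) := by
      simp only [Complex.normSq_apply, map_add, map_mul, Complex.conj_ofReal,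
        Complex.add_re, Complex.add_im, Complex.mul_re, Complex.mul_im,
        Complex.conj_re, Complex.conj_im, Complex.ofReal_re, Complex.ofReal_im]
      ring
    constructor
    · intro hle; rw [id1]; nlinarith
    · intro hle; rw [id1] at hle; nlinarith
  ext w
  cases w with
  | infty =>
    simp only [infty_mem_quadDisc, Set.mem_image]
    constructor
    · rintro ⟨u, hu, huw⟩
      cases u with
      | infty => rw [infty_mem_quadDisc] at hu; exact hu
      | coe z => exact absurd huw (OnePoint.coe_ne_infty _)
    · intro hA
      exact ⟨∞, infty_mem_quadDisc.2 hA, rfl⟩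
  | coe w =>
    rw [coe_mem_quadDisc]
    constructor
    · rintro ⟨u, hu, huw⟩
      cases u with
      | infty => exact absurd huw (OnePoint.infty_ne_coe _)
      | coe z =>
        rw [coe_mem_quadDisc] at hu
        rw [show simMap α β (z : OnePoint ℂ) = ((α * z + β : ℂ) : OnePoint ℂ) from rfl] at huw
        obtain rfl := OnePoint.coe_injective huw
        exact (key z).1 hu
    · intro hw
      refine ⟨((α⁻¹ * (w - β) : ℂ) : OnePoint ℂ), ?_, ?_⟩
      · rw [coe_mem_quadDisc]
        apply (key _).2
        have : α * (α⁻¹ * (w - β)) + β = w := by field_simp; ring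
        rwa [this]
      · rw [simMap_coe]
        norm_cast
        field_simp
        ring


lemma sphInv_isClosedDisc {D : Set (OnePoint ℂ)} (h : IsClosedDisc D) :
    IsClosedDisc (sphInv '' D) := by
  obtain ⟨A, b, C, hnd, rfl⟩ := quad_of_closedDisc h
  rw [sphInv_image_quadDisc]
  exact closedDisc_of_quad (by rw [Complex.normSq_conj, mul_comm]; exact hnd)

lemma simMap_isClosedDisc {α β : ℂ} (hα : α ≠ 0) {D : Set (OnePoint ℂ)}
    (h : IsClosedDisc D) : IsClosedDisc (simMap α β '' D) := by
  obtain ⟨A, b, C, hnd, rfl⟩ := quad_of_closedDisc h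
  rw [simMap_image_quadDisc hα]
  apply closedDisc_of_quad
  have hns : (0 : ℝ) < Complex.normSq α := Complex.normSq_pos.2 hα
  have id2 : Complex.normSq ((A : ℂ) * β + α * b)
      - A * (A * Complex.normSq β + 2 * (β * (starRingEnd ℂ) α * (starRingEnd ℂ) b).re
        + C * Complex.normSq α) = Complex.normSq α * (Complex.normSq b - A * C) := by
    simp only [Complex.normSq_apply, map_add, map_mul, Complex.conj_ofReal,
      Complex.add_re, Complex.add_im, Complex.mul_re, Complex.mul_im,
      Complex.conj_re, Complex.conj_im, Complex.ofReal_re, Complex.ofReal_im]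
    ring
  nlinarith [mul_pos hns (sub_pos.2 hnd)]

lemma simMap_leftInv {α : ℂ} (hα : α ≠ 0) (β : ℂ) :
    ∀ w, simMap α⁻¹ (-(β / α)) (simMap α β w) = w := by
  intro w
  cases w with
  | infty => rfl
  | coe z =>
    rw [simMap_coe, simMap_coe]
    norm_cast
    field_simp
    ring

lemma simMap_injective {α : ℂ} (hα : α ≠ 0) (β : ℂ) : Function.Injective (simMap α β) :=
  Function.LeftInverse.injective (g := simMap α⁻¹ (-(β / α))) (simMap_leftInv hα β)

lemma splittable_image {g : OnePoint ℂ → OnePoint ℂ} (hg : Function.Injective g)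
    (hD : ∀ D : Set (OnePoint ℂ), IsClosedDisc D → IsClosedDisc (g '' D))
    {A : Set (OnePoint ℂ)} (hA : Splittable A) : Splittable (g '' A) := by
  obtain ⟨D₁, D₂, D₃, h1, h2, h3, d12, d13, d23, c1, c2, c3⟩ := hA
  refine ⟨g '' D₁, g '' D₂, g '' D₃, hD _ h1, hD _ h2, hD _ h3,
    (Set.disjoint_image_iff hg).2 d12, (Set.disjoint_image_iff hg).2 d13,
    (Set.disjoint_image_iff hg).2 d23, ?_, ?_, ?_⟩ <;>
    rw [← Set.image_inter hg, Set.ncard_image_of_injective _ hg] <;> assumption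

lemma splittable_of_simMap_image {α : ℂ} (hα : α ≠ 0) (β : ℂ) {A : Set (OnePoint ℂ)}
    (hs : Splittable (simMap α β '' A)) : Splittable A := by
  have h2 := splittable_image (simMap_injective (inv_ne_zero hα) (-(β / α)))
    (fun D hD => simMap_isClosedDisc (inv_ne_zero hα) hD) hs
  rwa [Set.image_image, show (fun w => simMap α⁻¹ (-(β / α)) (simMap α β w)) = id from
    funext (simMap_leftInv hα β), Set.image_id] at h2

lemma splittable_of_sphInv_image {A : Set (OnePoint ℂ)}
    (hs : Splittable (sphInv '' A)) : Splittable A := by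
  have h2 := splittable_image sphInv_involutive.injective
    (fun D hD => sphInv_isClosedDisc hD) hs
  rwa [Set.image_image, show (fun w => sphInv (sphInv w)) = id from
    funext sphInv_involutive, Set.image_id] at h2

lemma exists_closest_pair {S : Set ℂ} (hfin : S.Finite) (h2 : 1 < S.ncard) :
    ∃ p ∈ S, ∃ q ∈ S, p ≠ q ∧
      ∀ z ∈ S, ∀ w ∈ S, z ≠ w → ‖p - q‖ ≤ ‖z - w‖ := by
  set P : Set (ℂ × ℂ) := (S ×ˢ S) ∩ {x | x.1 ≠ x.2} with hP
  have hPfin : P.Finite := (hfin.prod hfin).inter_of_left _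
  have hPne : P.Nonempty := by
    obtain ⟨a, ha, b, hb, hab⟩ := (Set.one_lt_ncard hfin).1 h2
    exact ⟨(a, b), ⟨⟨ha, hb⟩, hab⟩⟩
  obtain ⟨x, hxP, hmin⟩ := Set.exists_min_image P (fun x => ‖x.1 - x.2‖) hPfin hPne
  exact ⟨x.1, hxP.1.1, x.2, hxP.1.2, hxP.2,
    fun z hz w hw hzw => hmin (z, w) ⟨⟨hz, hw⟩, hzw⟩⟩

lemma main_infty
    (h : ∀ E : Set ℂ, Distinguished E →
      Splittable ((fun z : ℂ => (z : OnePoint ℂ)) '' E ∪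
        {((1 : ℂ) : OnePoint ℂ), ((-1 : ℂ) : OnePoint ℂ), ∞}))
    (A : Set (OnePoint ℂ)) (hA : A.ncard = 6) (hinf : ∞ ∈ A) : Splittable A := by
  have hAfin : A.Finite := Set.finite_of_ncard_ne_zero (by rw [hA]; norm_num)
  set S : Set ℂ := (fun z : ℂ => (z : OnePoint ℂ)) ⁻¹' A with hS
  have hSfin : S.Finite := hAfin.preimage (OnePoint.coe_injective.injOn)
  have hAeq : A = (fun z : ℂ => (z : OnePoint ℂ)) '' S ∪ {∞} := by
    ext w
    cases w with
    | infty => simp [hinf]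
    | coe z =>
      simp only [Set.mem_union, Set.mem_image, Set.mem_singleton_iff]
      constructor
      · intro hz; left; exact ⟨z, hz, rfl⟩
      · rintro (⟨u, hu, huz⟩ | hz)
        · obtain rfl := OnePoint.coe_injective huz; exact hu
        · exact absurd hz (OnePoint.coe_ne_infty z)
  have hScard : S.ncard = 5 := by
    have hdisj : Disjoint ((fun z : ℂ => (z : OnePoint ℂ)) '' S) {∞} := by
      rw [Set.disjoint_singleton_right]
      rintro ⟨z, _, hz⟩
      exact OnePoint.coe_ne_infty z hz
    have := hA
    rw [hAeq, Set.ncard_union_eq hdisj (hSfin.image _) (Set.finite_singleton _),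
      Set.ncard_image_of_injective _ OnePoint.coe_injective, Set.ncard_singleton] at this
    omega
  obtain ⟨p, hp, q, hq, hne, hmin⟩ := exists_closest_pair hSfin (by omega)
  have hpq : p - q ≠ 0 := sub_ne_zero.2 hne
  have habspq : 0 < ‖p - q‖ := by
    simpa using (norm_pos_iff.2 hpq)
  set α : ℂ := 2 / (p - q) with hαdef
  have hα : α ≠ 0 := div_ne_zero two_ne_zero hpq
  set β : ℂ := 1 - α * p with hβdef
  set f : ℂ → ℂ := fun z => α * z + β with hfdef
  have hfp : f p = 1 := by
    show α * p + β = 1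
    rw [hβdef]; ring
  have hfq : f q = -1 := by
    show α * q + β = -1
    rw [hβdef, hαdef]
    field_simp
    ring
  have habsα : ‖α‖ = 2 / ‖p - q‖ := by
    rw [hαdef, norm_div]; norm_num
  have hf_inj : Function.Injective f := fun a b hab => by
    have : α * a = α * b := by
      have := hab; simp only [hfdef] at this; linear_combination this
    exact mul_left_cancel₀ hα this
  have hdist2 : ∀ z ∈ S, ∀ w ∈ S, z ≠ w → 2 ≤ ‖f z - f w‖ := by
    intro z hz w hw hzw
    have : f z - f w = α * (z - w) := by simp [hfdef]; ring
    rw [this, norm_mul, habsα]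
    rw [div_mul_eq_mul_div, le_div_iff₀ habspq]
    have := hmin z hz w hw hzw
    nlinarith
  have hsub : ({p, q} : Set ℂ) ⊆ S := by
    intro x hx; rcases hx with rfl | rfl; exacts [hp, hq]
  set E : Set ℂ := f '' (S \ {p, q}) with hE
  have hdistE : Distinguished E := by
    refine ⟨?_, ?_, ?_⟩
    · rw [hE, Set.ncard_image_of_injective _ hf_inj,
        Set.ncard_diff hsub, Set.ncard_pair hne, hScard]
    · ext e
      simp only [Set.mem_inter_iff, Set.mem_empty_iff_false, iff_false, not_and]
      rintro ⟨z, hz, rfl⟩ hmem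
      have hz1 : z ≠ p := fun hzp => hz.2 (by rw [hzp]; exact Set.mem_insert _ _)
      have hz2 : z ≠ q := fun hzq => hz.2 (by rw [hzq]; exact Set.mem_insert_of_mem _ rfl)
      have hb1 : 2 ≤ ‖f z - 1‖ := by
        rw [← hfp]; exact hdist2 z hz.1 p hp hz1
      have hb2 : 2 ≤ ‖f z - (-1)‖ := by
        rw [← hfq]; exact hdist2 z hz.1 q hq hz2
      rcases hmem with hm | hm
      · rw [Set.mem_setOf_eq] at hm; linarith
      · rw [Set.mem_setOf_eq] at hm
        rw [show f z + 1 = f z - (-1) by ring] at hm; linarith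
    · rintro e1 ⟨z, hz, rfl⟩ e2 ⟨w, hw, rfl⟩ hne2
      exact hdist2 z hz.1 w hw.1 (fun hzw => hne2 (by rw [hzw]))
  have hsplit0 := h E hdistE
  have himg : simMap α β '' A =
      (fun z : ℂ => (z : OnePoint ℂ)) '' E ∪
        {((1 : ℂ) : OnePoint ℂ), ((-1 : ℂ) : OnePoint ℂ), ∞} := by
    rw [hAeq, Set.image_union]
    have h1 : simMap α β '' ((fun z : ℂ => (z : OnePoint ℂ)) '' S) =
        (fun z : ℂ => (z : OnePoint ℂ)) '' (f '' S) := by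
      rw [Set.image_image, Set.image_image]
      rfl
    have h2 : f '' S = E ∪ {1, -1} := by
      conv_lhs => rw [← Set.diff_union_of_subset hsub]
      rw [Set.image_union, Set.image_pair, hfp, hfq]
    have h3 : simMap α β '' ({∞} : Set (OnePoint ℂ)) = {∞} := by
      rw [Set.image_singleton]; rfl
    rw [h1, h2, h3, Set.image_union, Set.image_pair]
    ext w
    simp only [Set.mem_union, Set.mem_insert_iff, Set.mem_singleton_iff]
    tauto
  exact splittable_of_simMap_image hα β (himg ▸ hsplit0)


theorem reduction_to_distinguished
    (h : ∀ E : Set ℂ, Distinguished E →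
      Splittable ((fun z : ℂ => (z : OnePoint ℂ)) '' E ∪
        {((1 : ℂ) : OnePoint ℂ), ((-1 : ℂ) : OnePoint ℂ), ∞}))
    (A : Set (OnePoint ℂ)) (hA : A.ncard = 6) : Splittable A := by
  by_cases hinf : ∞ ∈ A
  · exact main_infty h A hA hinf
  · have hAfin : A.Finite := Set.finite_of_ncard_ne_zero (by rw [hA]; norm_num)
    have hAne : A.Nonempty := Set.nonempty_of_ncard_ne_zero (by rw [hA]; norm_num)
    obtain ⟨w0, hw0⟩ := hAne
    obtain ⟨c, hc⟩ : ∃ c : ℂ, (c : OnePoint ℂ) ∈ A := by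
      cases w0 with
      | infty => exact absurd hw0 hinf
      | coe z => exact ⟨z, hw0⟩
    set B : Set (OnePoint ℂ) := sphInv '' (simMap 1 (-c) '' A) with hB
    have hBcard : B.ncard = 6 := by
      rw [hB, Set.ncard_image_of_injective _ sphInv_involutive.injective,
        Set.ncard_image_of_injective _ (simMap_injective one_ne_zero (-c)), hA]
    have hBinf : ∞ ∈ B := by
      refine ⟨simMap 1 (-c) ((c : ℂ) : OnePoint ℂ), ⟨_, hc, rfl⟩, ?_⟩
      rw [simMap_coe]
      rw [show (1 : ℂ) * c + -c = 0 by ring]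
      exact sphInv_zero
    have hsB : Splittable B := main_infty h B hBcard hBinf
    have hsA1 : Splittable (simMap 1 (-c) '' A) := by
      apply splittable_of_sphInv_image
      rwa [← hB]
    exact splittable_of_simMap_image one_ne_zero (-c) hsA1
end
end

section
/- Let E ⊆ ℂ be a three-element set that is splittable by a strip and such that E ∪ {−1, 1} has five elements. Then the six-element set E ∪ {−1, 1, ∞} ⊆ ℂ ∪ {∞} is splittable. -/
open OnePoint Set

noncomputable section

set_option maxHeartbeats 2000000 in
lemma key_split (E : Set ℂ) (a : ℂ) (ha : ‖a‖ = 1)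
    (p q w : ℂ) (hpq : p ≠ q) (hE : E = {p, q, w})
    (hp : 1 < (p / a).im) (hq : 1 < (q / a).im) (hw : (w / a).im < -1) :
    Splittable ((fun z : ℂ => (z : OnePoint ℂ)) '' E ∪
      {((-1 : ℂ) : OnePoint ℂ), ((1 : ℂ) : OnePoint ℂ), ∞}) := by
  have ha0 : a ≠ 0 := by
    intro h; rw [h] at ha; simp at ha
  have hnorm : Complex.normSq a = 1 := by rw [← Complex.sq_norm, ha]; norm_num
  have hmul : a * (starRingEnd ℂ) a = 1 := by
    rw [Complex.mul_conj, hnorm]; norm_num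
  have hinv : a⁻¹ = (starRingEnd ℂ) a := inv_eq_of_mul_eq_one_right hmul
  have zdiv : ∀ z : ℂ, z / a = z * (starRingEnd ℂ) a := fun z => by
    rw [div_eq_mul_inv, hinv]
  have habsdiv : ∀ z : ℂ, ‖z / a‖ = ‖z‖ := fun z => by
    rw [norm_div, ha, div_one]
  have himle : ∀ z : ℂ, |(z / a).im| ≤ ‖z‖ := fun z =>
    le_trans (Complex.abs_im_le_norm _) (le_of_eq (habsdiv z))
  -- rotated coordinates
  set P := p / a with hP
  set Q := q / a with hQ
  set x := (P.re - Q.re) / 2 with hx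
  set m := min P.im Q.im with hm
  set M := max P.im Q.im with hM
  set s := M + (x ^ 2 + m ^ 2) / (2 * (m - 1)) with hs
  set ρ := Real.sqrt (x ^ 2 + (s - m) ^ 2) with hρ
  set C := (((P.re + Q.re) / 2 : ℝ) : ℂ) + (s : ℝ) * Complex.I with hCdef
  have h1m : 1 < m := lt_min hp hq
  have hmM : m ≤ M := min_le_max
  have hden : (0:ℝ) < 2 * (m - 1) := by linarith
  have hfrac : 0 < (x ^ 2 + m ^ 2) / (2 * (m - 1)) := by
    apply div_pos (by nlinarith) hden
  have hMs : M < s := by rw [hs]; linarith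
  have hms : m < s := lt_of_le_of_lt hmM hMs
  have h1s : (1:ℝ) < s := lt_trans h1m hms
  have hρlt : ρ < s - 1 := by
    rw [hρ]
    rw [Real.sqrt_lt' (by linarith)]
    have h2 : 2 * s * (m - 1) = 2 * M * (m - 1) + x ^ 2 + m ^ 2 := by
      have hm1 : m - 1 ≠ 0 := by linarith
      rw [hs]; field_simp; ring
    nlinarith [h2, mul_pos (show (0:ℝ) < M by linarith) (show (0:ℝ) < m - 1 by linarith)]
  have hρpos : 0 < ρ := Real.sqrt_pos.mpr (by nlinarith)
  have hCre : C.re = (P.re + Q.re) / 2 := by simp [hCdef]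
  have hCim : C.im = s := by simp [hCdef]
  have habsf : ∀ z : ℂ, ‖z‖ = Real.sqrt (z.re ^ 2 + z.im ^ 2) := by
    intro z; rw [Complex.norm_def, Complex.normSq_apply]; ring_nf
  have hPmle : m ≤ P.im := min_le_left _ _
  have hQmle : m ≤ Q.im := min_le_right _ _
  have hPMle : P.im ≤ M := le_max_left _ _
  have hQMle : Q.im ≤ M := le_max_right _ _
  have hPC : ‖P - C‖ ≤ ρ := by
    rw [habsf, hρ]
    apply Real.sqrt_le_sqrt
    have e1 : (P - C).re = x := by rw [Complex.sub_re, hCre, hx]; ring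
    have e2 : (P - C).im = P.im - s := by rw [Complex.sub_im, hCim]
    rw [e1, e2]
    nlinarith [hPmle, hPMle, hMs]
  have hQC : ‖Q - C‖ ≤ ρ := by
    rw [habsf, hρ]
    apply Real.sqrt_le_sqrt
    have e1 : (Q - C).re = -x := by rw [Complex.sub_re, hCre, hx]; ring
    have e2 : (Q - C).im = Q.im - s := by rw [Complex.sub_im, hCim]
    rw [e1, e2]
    nlinarith [hQmle, hQMle, hMs]
  have hlow : ∀ z : ℂ, ‖z - C‖ ≤ ρ → 1 < z.im := by
    intro z hz
    have h1 : |z.im - s| ≤ ρ := by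
      have h2 := Complex.abs_im_le_norm (z - C)
      rw [Complex.sub_im, hCim] at h2
      exact le_trans h2 hz
    have h3 := (abs_le.mp h1).1
    linarith
  -- transfer to original coordinates
  have htrans : ∀ z : ℂ, ‖z - a * C‖ = ‖z / a - C‖ := by
    intro z
    have h1 : z - a * C = a * (z / a - C) := by field_simp
    rw [h1, norm_mul, ha, one_mul]
  -- the strip parameter
  set t := (1 + -(w / a).im) / 2 with ht
  have ht1 : 1 < t := by rw [ht]; linarith
  have htw : t < -(w / a).im := by rw [ht]; linarith
  -- half-plane form
  have hform : ∀ z : ℂ, (z * (starRingEnd ℂ) (-Complex.I * a)).re = -((z / a).im) := by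
    intro z
    rw [zdiv]
    simp [Complex.mul_re, Complex.mul_im, Complex.conj_re, Complex.conj_im,
      Complex.I_re, Complex.I_im]
    ring
  -- the three discs
  set D₁ : Set (OnePoint ℂ) :=
    {∞} ∪ (fun z : ℂ => (z : OnePoint ℂ)) ''
      {z | t ≤ (z * (starRingEnd ℂ) (-Complex.I * a)).re} with hD₁
  set D₂ : Set (OnePoint ℂ) :=
    (fun z : ℂ => (z : OnePoint ℂ)) '' {z | ‖z - a * C‖ ≤ ρ} with hD₂
  set D₃ : Set (OnePoint ℂ) :=
    (fun z : ℂ => (z : OnePoint ℂ)) '' {z | ‖z - 0‖ ≤ 1} with hD₃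
  -- membership characterizations
  have hmem1 : ∀ z : ℂ, ((z : OnePoint ℂ) ∈ D₁) ↔ (z / a).im ≤ -t := by
    intro z
    rw [hD₁]
    simp only [Set.mem_union, Set.mem_singleton_iff, Set.mem_image, Set.mem_setOf_eq]
    constructor
    · rintro (h | ⟨y, hy, hyz⟩)
      · exact absurd h.symm (OnePoint.infty_ne_coe z)
      · rw [OnePoint.coe_eq_coe] at hyz
        subst hyz
        rw [hform] at hy; linarith
    · intro h
      right
      exact ⟨z, by rw [hform]; linarith, rfl⟩
  have hinf1 : ∞ ∈ D₁ := by rw [hD₁]; left; rfl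
  have hmem2 : ∀ z : ℂ, ((z : OnePoint ℂ) ∈ D₂) ↔ ‖z / a - C‖ ≤ ρ := by
    intro z
    rw [hD₂]
    simp only [Set.mem_image, Set.mem_setOf_eq]
    constructor
    · rintro ⟨y, hy, hyz⟩
      rw [OnePoint.coe_eq_coe] at hyz; subst hyz
      rwa [htrans] at hy
    · intro h; exact ⟨z, by rwa [htrans], rfl⟩
  have hinf2 : ∞ ∉ D₂ := by
    rw [hD₂]; rintro ⟨y, _, hy⟩; exact (OnePoint.infty_ne_coe y) hy.symm
  have hmem3 : ∀ z : ℂ, ((z : OnePoint ℂ) ∈ D₃) ↔ ‖z‖ ≤ 1 := by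
    intro z
    rw [hD₃]
    simp only [Set.mem_image, Set.mem_setOf_eq, sub_zero]
    constructor
    · rintro ⟨y, hy, hyz⟩
      rw [OnePoint.coe_eq_coe] at hyz; subst hyz; exact hy
    · intro h; exact ⟨z, h, rfl⟩
  have hinf3 : ∞ ∉ D₃ := by
    rw [hD₃]; rintro ⟨y, _, hy⟩; exact (OnePoint.infty_ne_coe y) hy.symm
  -- basic facts about D₂ members
  have hD₂im : ∀ z : ℂ, ((z : OnePoint ℂ) ∈ D₂) → 1 < (z / a).im := by
    intro z hz
    exact hlow _ ((hmem2 z).mp hz)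
  -- the set A
  have hA : ((fun z : ℂ => (z : OnePoint ℂ)) '' E ∪
      {((-1 : ℂ) : OnePoint ℂ), ((1 : ℂ) : OnePoint ℂ), ∞}) =
      {((p:ℂ) : OnePoint ℂ), ((q:ℂ) : OnePoint ℂ), ((w:ℂ) : OnePoint ℂ),
        ((-1 : ℂ) : OnePoint ℂ), ((1 : ℂ) : OnePoint ℂ), ∞} := by
    rw [hE]
    ext u
    simp only [Set.image_insert_eq, Set.image_singleton, Set.mem_union,
      Set.mem_insert_iff, Set.mem_singleton_iff]
    tauto
  set A := ((fun z : ℂ => (z : OnePoint ℂ)) '' E ∪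
      {((-1 : ℂ) : OnePoint ℂ), ((1 : ℂ) : OnePoint ℂ), ∞}) with hAdef
  -- membership of each point
  have hone_im : |((1:ℂ) / a).im| ≤ 1 := le_trans (himle 1) (by simp)
  have hnegone_im : |((-1:ℂ) / a).im| ≤ 1 := le_trans (himle (-1)) (by simp)
  have hp_in2 : ((p : OnePoint ℂ)) ∈ D₂ := (hmem2 p).mpr hPC
  have hq_in2 : ((q : OnePoint ℂ)) ∈ D₂ := (hmem2 q).mpr hQC
  have hw_in1 : ((w : OnePoint ℂ)) ∈ D₁ := (hmem1 w).mpr (by linarith)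
  have hm1_in3 : (((-1:ℂ) : OnePoint ℂ)) ∈ D₃ := (hmem3 (-1)).mpr (by simp)
  have hp1_in3 : (((1:ℂ) : OnePoint ℂ)) ∈ D₃ := (hmem3 1).mpr (by simp)
  -- exclusions
  have habs_e : ∀ z : ℂ, 1 < |(z / a).im| → ¬ ((z : OnePoint ℂ) ∈ D₃) := by
    intro z hz h3
    have := (hmem3 z).mp h3
    have h4 := himle z
    linarith
  have hp_not1 : ¬ (((p:ℂ) : OnePoint ℂ) ∈ D₁) := by
    rw [hmem1]; intro h; linarith
  have hq_not1 : ¬ (((q:ℂ) : OnePoint ℂ) ∈ D₁) := by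
    rw [hmem1]; intro h; linarith
  have hw_not2 : ¬ (((w:ℂ) : OnePoint ℂ) ∈ D₂) := by
    intro h; have := hD₂im w h; linarith
  have hone_not1 : ¬ (((1:ℂ) : OnePoint ℂ) ∈ D₁) := by
    rw [hmem1]; intro h
    have := neg_abs_le (((1:ℂ) / a).im)
    linarith
  have hnegone_not1 : ¬ ((((-1):ℂ) : OnePoint ℂ) ∈ D₁) := by
    rw [hmem1]; intro h
    have := neg_abs_le ((((-1):ℂ) / a).im)
    linarith
  have hone_not2 : ¬ (((1:ℂ) : OnePoint ℂ) ∈ D₂) := by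
    intro h; have := hD₂im 1 h
    have := le_abs_self (((1:ℂ) / a).im)
    linarith
  have hnegone_not2 : ¬ ((((-1):ℂ) : OnePoint ℂ) ∈ D₂) := by
    intro h; have := hD₂im (-1) h
    have := le_abs_self ((((-1):ℂ) / a).im)
    linarith
  have hp_not3 : ¬ (((p:ℂ) : OnePoint ℂ) ∈ D₃) := habs_e p (by rw [lt_abs]; left; exact hp)
  have hq_not3 : ¬ (((q:ℂ) : OnePoint ℂ) ∈ D₃) := habs_e q (by rw [lt_abs]; left; exact hq)
  have hw_not3 : ¬ (((w:ℂ) : OnePoint ℂ) ∈ D₃) := habs_e w (by rw [lt_abs]; right; linarith)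
  -- disjointness
  have hdisj12 : Disjoint D₁ D₂ := by
    rw [Set.disjoint_left]
    intro u h1 h2
    induction u using OnePoint.rec with
    | infty => exact hinf2 h2
    | coe z =>
      have ha1 := (hmem1 z).mp h1
      have ha2 := hD₂im z h2
      linarith
  have hdisj13 : Disjoint D₁ D₃ := by
    rw [Set.disjoint_left]
    intro u h1 h3
    induction u using OnePoint.rec with
    | infty => exact hinf3 h3
    | coe z =>
      have ha1 := (hmem1 z).mp h1
      have ha3 := (hmem3 z).mp h3
      have h4 := himle z
      have := neg_abs_le ((z / a).im)
      linarith
  have hdisj23 : Disjoint D₂ D₃ := by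
    rw [Set.disjoint_left]
    intro u h2 h3
    induction u using OnePoint.rec with
    | infty => exact hinf2 h2
    | coe z =>
      have ha2 := hD₂im z h2
      have ha3 := (hmem3 z).mp h3
      have h4 := himle z
      have := le_abs_self ((z / a).im)
      linarith
  -- the intersections
  have hpm : ((p : ℂ) : OnePoint ℂ) ∈ A := by rw [hA]; simp
  have hqm : ((q : ℂ) : OnePoint ℂ) ∈ A := by rw [hA]; simp
  have hwm : ((w : ℂ) : OnePoint ℂ) ∈ A := by rw [hA]; simp
  have hm1m : (((-1:ℂ)) : OnePoint ℂ) ∈ A := by rw [hA]; simp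
  have hp1m : (((1:ℂ)) : OnePoint ℂ) ∈ A := by rw [hA]; simp
  have hinfm : (∞ : OnePoint ℂ) ∈ A := by rw [hA]; simp
  have hI1 : D₁ ∩ A = {(∞ : OnePoint ℂ), ((w : ℂ) : OnePoint ℂ)} := by
    ext u
    constructor
    · rintro ⟨hu1, hu2⟩
      rw [hA] at hu2
      simp only [Set.mem_insert_iff, Set.mem_singleton_iff] at hu2 ⊢
      rcases hu2 with h|h|h|h|h|h <;> subst h
      · exact absurd hu1 hp_not1
      · exact absurd hu1 hq_not1
      · right; rfl
      · exact absurd hu1 hnegone_not1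
      · exact absurd hu1 hone_not1
      · left; rfl
    · intro hu
      simp only [Set.mem_insert_iff, Set.mem_singleton_iff] at hu
      rcases hu with h|h <;> subst h
      · exact ⟨hinf1, hinfm⟩
      · exact ⟨hw_in1, hwm⟩
  have hI2 : D₂ ∩ A = {((p : ℂ) : OnePoint ℂ), ((q : ℂ) : OnePoint ℂ)} := by
    ext u
    constructor
    · rintro ⟨hu1, hu2⟩
      rw [hA] at hu2
      simp only [Set.mem_insert_iff, Set.mem_singleton_iff] at hu2 ⊢
      rcases hu2 with h|h|h|h|h|h <;> subst h
      · left; rfl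
      · right; rfl
      · exact absurd hu1 hw_not2
      · exact absurd hu1 hnegone_not2
      · exact absurd hu1 hone_not2
      · exact absurd hu1 hinf2
    · intro hu
      simp only [Set.mem_insert_iff, Set.mem_singleton_iff] at hu
      rcases hu with h|h <;> subst h
      · exact ⟨hp_in2, hpm⟩
      · exact ⟨hq_in2, hqm⟩
  have hI3 : D₃ ∩ A = {(((-1):ℂ) : OnePoint ℂ), ((( 1):ℂ) : OnePoint ℂ)} := by
    ext u
    constructor
    · rintro ⟨hu1, hu2⟩
      rw [hA] at hu2
      simp only [Set.mem_insert_iff, Set.mem_singleton_iff] at hu2 ⊢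
      rcases hu2 with h|h|h|h|h|h <;> subst h
      · exact absurd hu1 hp_not3
      · exact absurd hu1 hq_not3
      · exact absurd hu1 hw_not3
      · left; rfl
      · right; rfl
      · exact absurd hu1 hinf3
    · intro hu
      simp only [Set.mem_insert_iff, Set.mem_singleton_iff] at hu
      rcases hu with h|h <;> subst h
      · exact ⟨hm1_in3, hm1m⟩
      · exact ⟨hp1_in3, hp1m⟩
  refine ⟨D₁, D₂, D₃, ?_, ?_, ?_, hdisj12, hdisj13, hdisj23, ?_, ?_, ?_⟩
  · right; right
    exact ⟨-Complex.I * a, by simp [ha0, Complex.I_ne_zero], t, hD₁⟩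
  · left; exact ⟨a * C, ρ, hρpos, hD₂⟩
  · left; exact ⟨0, 1, one_pos, hD₃⟩
  · rw [hI1]; exact Set.ncard_pair (OnePoint.infty_ne_coe w)
  · rw [hI2]; exact Set.ncard_pair (by rw [Ne, OnePoint.coe_eq_coe]; exact hpq)
  · rw [hI3]
    exact Set.ncard_pair (by rw [Ne, OnePoint.coe_eq_coe]; norm_num)

theorem splittable_of_splittableByStrip (E : Set ℂ) (hcard : E.ncard = 3)
    (hstrip : SplittableByStrip E)
    (hfive : (E ∪ {(-1 : ℂ), (1 : ℂ)}).ncard = 5) :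
    Splittable ((fun z : ℂ => (z : OnePoint ℂ)) '' E ∪
      {((-1 : ℂ) : OnePoint ℂ), ((1 : ℂ) : OnePoint ℂ), ∞}) := by
  obtain ⟨a, ha, hall, z₀, hz₀, w₀, hw₀, hz₀i, hw₀i⟩ := hstrip
  obtain ⟨p, q, r, hpq, hpr, hqr, hE⟩ := Set.ncard_eq_three.mp hcard
  have hpe : p ∈ E := by rw [hE]; simp
  have hqe : q ∈ E := by rw [hE]; simp
  have hre : r ∈ E := by rw [hE]; simp
  have hsign : ∀ x ∈ E, 1 < (x / a).im ∨ (x / a).im < -1 := by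
    intro x hx
    have h := hall x hx
    rcases lt_abs.mp h with h1 | h1
    · left; exact h1
    · right; linarith
  have hna : ‖-a‖ = 1 := by rw [norm_neg]; exact ha
  have hneg : ∀ z : ℂ, (z / (-a)).im = -((z / a).im) := by
    intro z; rw [div_neg, Complex.neg_im]
  have hE2 : E = {p, r, q} := by rw [hE]; ext u; simp; tauto
  have hE3 : E = {q, r, p} := by rw [hE]; ext u; simp; tauto
  have hz₀3 : z₀ = p ∨ z₀ = q ∨ z₀ = r := by rw [hE] at hz₀; simpa using hz₀
  have hw₀3 : w₀ = p ∨ w₀ = q ∨ w₀ = r := by rw [hE] at hw₀; simpa using hw₀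
  rcases hsign p hpe with hp1 | hp1 <;> rcases hsign q hqe with hq1 | hq1 <;>
    rcases hsign r hre with hr1 | hr1
  · exfalso; rcases hw₀3 with h|h|h <;> subst h <;> linarith
  · exact key_split E a ha p q r hpq hE hp1 hq1 hr1
  · exact key_split E a ha p r q hpr hE2 hp1 hr1 hq1
  · exact key_split E (-a) hna q r p hqr hE3 (by rw [hneg]; linarith)
      (by rw [hneg]; linarith) (by rw [hneg]; linarith)
  · exact key_split E a ha q r p hqr hE3 hq1 hr1 hp1
  · exact key_split E (-a) hna p r q hpr hE2 (by rw [hneg]; linarith)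
      (by rw [hneg]; linarith) (by rw [hneg]; linarith)
  · exact key_split E (-a) hna p q r hpq hE (by rw [hneg]; linarith)
      (by rw [hneg]; linarith) (by rw [hneg]; linarith)
  · exfalso; rcases hz₀3 with h|h|h <;> subst h <;> linarith
end
end

section
/- Let E ⊆ ℂ be a distinguished three-element set that is not splittable by a strip. Then one of the following holds: (i) there exists a ∈ ℂ with |a| = 1 such that z/a ∈ Σ for all z ∈ E; or (ii) there exist a ∈ ℂ with |a| = 1 and an enumeration E = {z₁, z₂, z₃} such that Re(z₁/a) ≥ 0 and Im(z₁/a) = 1, z₂/a ∈ Σ, Im(z₃/a) < −1, and z₂ and z₃ are approximately collinear. -/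
open OnePoint Set

noncomputable section

namespace CNS

open Real

/-- s-coordinate: imaginary part after rotating by `-θ`. -/
noncomputable def sf (z : ℂ) (θ : ℝ) : ℝ := (z / Complex.exp (θ * Complex.I)).im

/-- c-coordinate: real part after rotating by `-θ`. -/
noncomputable def cf (z : ℂ) (θ : ℝ) : ℝ := (z / Complex.exp (θ * Complex.I)).re

/-- The consequence of avoiding Ω. -/
def OM (z : ℂ) : Prop := 3 + 2 * |z.re| ≤ Complex.normSq z

/-- half-width of the strip-zone of `z`. -/
noncomputable def dv (z : ℂ) : ℝ := Real.arcsin (‖z‖)⁻¹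

lemma div_exp (z : ℂ) (θ : ℝ) :
    z / Complex.exp (θ * Complex.I)
      = (‖z‖ : ℂ) * Complex.exp ((Complex.arg z - θ : ℝ) * Complex.I) := by
  conv_lhs => rw [← Complex.norm_mul_exp_arg_mul_I z]
  rw [mul_div_assoc, ← Complex.exp_sub, ← sub_mul]
  norm_cast

lemma sf_eq (z : ℂ) (θ : ℝ) :
    sf z θ = ‖z‖ * Real.sin (Complex.arg z - θ) := by
  rw [sf, div_exp, Complex.mul_im, Complex.ofReal_re, Complex.ofReal_im,
    Complex.exp_ofReal_mul_I_im]
  ring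

lemma cf_eq (z : ℂ) (θ : ℝ) :
    cf z θ = ‖z‖ * Real.cos (Complex.arg z - θ) := by
  rw [cf, div_exp, Complex.mul_re, Complex.ofReal_re, Complex.ofReal_im,
    Complex.exp_ofReal_mul_I_re]
  ring

section PointFacts

variable {z : ℂ} (hz : OM z)
include hz

lemma R2_ge : 3 ≤ (‖z‖) ^ 2 := by
  rw [Complex.sq_norm]
  have := abs_nonneg z.re
  unfold OM at hz; linarith

lemma R_pos : 0 < ‖z‖ := by
  have h := R2_ge hz
  by_contra h'
  push_neg at h'
  have h0 := norm_nonneg z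
  nlinarith

lemma R_ge : Real.sqrt 3 ≤ ‖z‖ := by
  have h := R2_ge hz
  have h0 := R_pos hz
  nlinarith [Real.sq_sqrt (by norm_num : (3:ℝ) ≥ 0), Real.sqrt_nonneg 3]

lemma inv_R_le : (‖z‖)⁻¹ ≤ 1 / Real.sqrt 3 := by
  have h := R_ge hz
  have h3 : (0:ℝ) < Real.sqrt 3 := by positivity
  rw [one_div]
  exact inv_anti₀ h3 h

lemma inv_R_mem : (‖z‖)⁻¹ ∈ Set.Icc (-1 : ℝ) 1 := by
  constructor
  · have h0 := (R_pos hz).le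
    have : (0:ℝ) ≤ (‖z‖)⁻¹ := inv_nonneg.2 h0
    linarith
  · have h := inv_R_le hz
    have : (1:ℝ) / Real.sqrt 3 ≤ 1 := by
      rw [div_le_one (by positivity)]
      nlinarith [Real.sq_sqrt (by norm_num : (3:ℝ) ≥ 0), Real.sqrt_nonneg 3]
    linarith

lemma sin_dv : Real.sin (dv z) = (‖z‖)⁻¹ := by
  have h := inv_R_mem hz
  exact Real.sin_arcsin h.1 h.2

lemma R_sin_dv : ‖z‖ * Real.sin (dv z) = 1 := by
  rw [sin_dv hz]
  exact mul_inv_cancel₀ (ne_of_gt (R_pos hz))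

lemma dv_pos : 0 < dv z :=
  Real.arcsin_pos.2 (by have := R_pos hz; positivity)

lemma dv_lt : dv z < π / 4 := by
  have h := inv_R_mem hz
  have h2 : (‖z‖)⁻¹ < Real.sin (π/4) := by
    rw [Real.sin_pi_div_four]
    have := inv_R_le hz
    have h6 : (1:ℝ)/Real.sqrt 3 < Real.sqrt 2 / 2 := by
      rw [div_lt_div_iff₀ (by positivity) (by norm_num)]
      nlinarith [Real.sq_sqrt (by norm_num : (2:ℝ) ≥ 0), Real.sq_sqrt (by norm_num : (3:ℝ) ≥ 0),
        Real.sqrt_nonneg 2, Real.sqrt_nonneg 3,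
        mul_pos (Real.sqrt_pos.2 (by norm_num : (0:ℝ)<2)) (Real.sqrt_pos.2 (by norm_num : (0:ℝ)<3))]
    linarith
  have hy : π/4 ∈ Set.Icc (-(π/2)) (π/2) := by
    constructor <;> linarith [Real.pi_pos]
  exact (Real.arcsin_lt_iff_lt_sin h hy).2 h2

lemma dv_lt_half : dv z < π / 2 := by
  have := dv_lt hz; have := Real.pi_pos; linarith

end PointFacts

/-- monotonicity helper: `sin` exceeds `sin d` strictly inside `(d, π - d)`. -/
lemma sin_mid_gt {d y : ℝ} (hd0 : 0 ≤ d) (hd : d < π/2) (h1 : d < y) (h2 : y < π - d) :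
    Real.sin d < Real.sin y := by
  rcases le_total y (π/2) with h | h
  · exact Real.strictMonoOn_sin ⟨by linarith, by linarith⟩ ⟨by linarith, h⟩ h1
  · rw [← Real.sin_pi_sub y]
    exact Real.strictMonoOn_sin ⟨by linarith, by linarith⟩ ⟨by linarith, by linarith⟩
      (by linarith)

lemma sin_mid_ge {d y : ℝ} (hd0 : 0 ≤ d) (hd : d < π/2) (h1 : d ≤ y) (h2 : y ≤ π - d) :
    Real.sin d ≤ Real.sin y := by
  rcases eq_or_lt_of_le h1 with rfl | h1'
  · exact le_rfl
  rcases eq_or_lt_of_le h2 with h2' | h2'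
  · rw [h2', Real.sin_pi_sub]
  · exact (sin_mid_gt hd0 hd h1' h2').le


section Status

variable {z : ℂ} {θ y : ℝ} {k : ℤ}

lemma sf_lift (hk : Complex.arg z - θ = y + 2*(k:ℝ)*π) :
    sf z θ = ‖z‖ * Real.sin y := by
  rw [sf_eq, hk, show y + 2*(k:ℝ)*π = y + (k:ℝ)*(2*π) by ring,
    Real.sin_add_int_mul_two_pi]

lemma cf_lift (hk : Complex.arg z - θ = y + 2*(k:ℝ)*π) :
    cf z θ = ‖z‖ * Real.cos y := by
  rw [cf_eq, hk, show y + 2*(k:ℝ)*π = y + (k:ℝ)*(2*π) by ring,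
    Real.cos_add_int_mul_two_pi]

variable (hz : OM z)
include hz

lemma status_above (hk : Complex.arg z - θ = y + 2*(k:ℝ)*π)
    (h1 : dv z < y) (h2 : y < π - dv z) : 1 < sf z θ := by
  rw [sf_lift hk]
  calc (1:ℝ) = ‖z‖ * Real.sin (dv z) := (R_sin_dv hz).symm
    _ < _ := by
        have := sin_mid_gt (dv_pos hz).le (dv_lt_half hz) h1 h2
        exact mul_lt_mul_of_pos_left this (R_pos hz)

lemma status_below (hk : Complex.arg z - θ = y + 2*(k:ℝ)*π)
    (h1 : -π + dv z < y) (h2 : y < -(dv z)) : sf z θ < -1 := by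
  rw [sf_lift hk]
  have hy : Real.sin y = -Real.sin (-y) := by rw [Real.sin_neg]; ring
  rw [hy]
  have := sin_mid_gt (dv_pos hz).le (dv_lt_half hz) (by linarith : dv z < -y)
    (by linarith : -y < π - dv z)
  have h3 := mul_lt_mul_of_pos_left this (R_pos hz)
  rw [R_sin_dv hz] at h3
  linarith

lemma status_in (hk : Complex.arg z - θ = y + 2*(k:ℝ)*π)
    (h : |y| ≤ dv z) : z / Complex.exp (θ * Complex.I) ∈ HalfStrip := by
  have hd2 := dv_lt_half hz
  have hd0 := (dv_pos hz).le
  have hy := abs_le.1 h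
  have hπ := Real.pi_pos
  constructor
  · -- 0 ≤ re
    show 0 ≤ cf z θ
    rw [cf_lift hk]
    have : (0:ℝ) ≤ Real.cos y := by
      apply Real.cos_nonneg_of_mem_Icc
      exact Set.mem_Icc.2 ⟨by linarith, by linarith⟩
    positivity
  · -- |im| ≤ 1
    show |sf z θ| ≤ 1
    rw [sf_lift hk, abs_mul, abs_of_nonneg (norm_nonneg _)]
    rw [← R_sin_dv hz]
    apply mul_le_mul_of_nonneg_left _ (norm_nonneg _)
    rw [abs_le]
    constructor
    · have h5 : Real.sin (-(dv z)) ≤ Real.sin y :=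
        Real.strictMonoOn_sin.monotoneOn
          (Set.mem_Icc.2 ⟨by linarith, by linarith⟩)
          (Set.mem_Icc.2 ⟨by linarith, by linarith⟩) hy.1
      rw [Real.sin_neg] at h5
      linarith
    · exact Real.strictMonoOn_sin.monotoneOn
        (Set.mem_Icc.2 ⟨by linarith, by linarith⟩)
        (Set.mem_Icc.2 ⟨by linarith, by linarith⟩) hy.2

lemma status_top (hk : Complex.arg z - θ = dv z + 2*(k:ℝ)*π) :
    sf z θ = 1 ∧ 0 ≤ cf z θ := by
  constructor
  · rw [sf_lift hk]; exact R_sin_dv hz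
  · rw [cf_lift hk]
    have : (0:ℝ) ≤ Real.cos (dv z) := by
      apply Real.cos_nonneg_of_mem_Icc
      have := dv_pos hz; have := dv_lt_half hz; have := Real.pi_pos
      constructor <;> linarith
    positivity

end Status

lemma mk_split {E : Set ℂ} {p q r : ℂ} (hE : E = {p, q, r}) (θ : ℝ)
    (hp : 1 < sf p θ) (hq : sf q θ < -1) (hr : 1 < |sf r θ|) :
    SplittableByStrip E := by
  refine ⟨Complex.exp (θ * Complex.I), Complex.norm_exp_ofReal_mul_I θ, ?_,
    p, by rw [hE]; simp, q, by rw [hE]; simp, hp, hq⟩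
  intro w hw
  rw [hE] at hw
  have he : (w / Complex.exp (θ*Complex.I)).im = sf w θ := rfl
  rw [he]
  rcases hw with rfl | rfl | rfl
  · exact lt_of_lt_of_le hp (le_abs_self _)
  · rw [abs_of_neg (by linarith)]; linarith
  · exact hr


/-- The conclusion of the main theorem. -/
def Goal (E : Set ℂ) : Prop :=
  (∃ a : ℂ, ‖a‖ = 1 ∧ ∀ z ∈ E, z / a ∈ HalfStrip) ∨
    (∃ a : ℂ, ‖a‖ = 1 ∧ ∃ z₁ z₂ z₃ : ℂ, E = {z₁, z₂, z₃} ∧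
      0 ≤ (z₁ / a).re ∧ (z₁ / a).im = 1 ∧
      z₂ / a ∈ HalfStrip ∧
      (z₃ / a).im < -1 ∧
      ApproxCollinear z₂ z₃)

lemma mkcol {L A : ℂ} (hOL : OM L) (hOA : OM A) (t : ℝ) (kL kA : ℤ) (yL yA : ℝ)
    (hLe : Complex.arg L - t = yL + 2*(kL:ℝ)*π) (hyL : |yL| ≤ dv L)
    (hAe : Complex.arg A - t = yA + 2*(kA:ℝ)*π) (hyA : |yA| ≤ dv A) :
    ApproxCollinear L A :=
  ⟨Complex.exp (t * Complex.I), Complex.norm_exp_ofReal_mul_I _,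
    status_in hOL hLe hyL, status_in hOA hAe hyA⟩

/-- The core lemma: an edge configuration yields case (ii) (or the set is splittable). -/
lemma core {E : Set ℂ} (hstrip : ¬ SplittableByStrip E) (B L A : ℂ) (hE : E = {B, L, A})
    (hOB : OM B) (hOL : OM L) (hOA : OM A) (θ : ℝ) (kB kL kA : ℤ) (yL yA : ℝ)
    (hB : Complex.arg B - θ = dv B + 2*(kB:ℝ)*π)
    (hL : Complex.arg L - θ = yL + 2*(kL:ℝ)*π) (hyL : |yL| ≤ dv L)
    (hA : Complex.arg A - θ = yA + 2*(kA:ℝ)*π)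
    (hA1 : -π + dv A < yA) (hA2 : yA < -(dv A)) :
    Goal E := by
  have hπ := Real.pi_pos
  have hdB := dv_pos hOB; have hdL := dv_pos hOL; have hdA := dv_pos hOA
  have hdB4 := dv_lt hOB; have hdL4 := dv_lt hOL; have hdA4 := dv_lt hOA
  have hyL' := abs_le.1 hyL
  obtain ⟨d, hd_def⟩ : ∃ d : ℝ, d = dv L - yL := ⟨_, rfl⟩
  obtain ⟨e, he_def⟩ : ∃ e : ℝ, e = -(dv A) - yA := ⟨_, rfl⟩
  have hd0 : 0 ≤ d := by rw [hd_def]; linarith [hyL'.2]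
  have hd2 : d ≤ 2 * dv L := by rw [hd_def]; linarith [hyL'.1]
  have he0 : 0 < e := by rw [he_def]; linarith
  rcases le_or_gt e d with he | hlt
  · -- case (ii)
    right
    have h1 := status_top hOB hB
    have h2 := status_in hOL hL hyL
    have h3 := status_below hOA hA hA1 hA2
    have hLe : Complex.arg L - (θ - e) = (yL + e) + 2*(kL:ℝ)*π := by
      rw [he_def]; linarith [hL]
    have hAe : Complex.arg A - (θ - e) = (-(dv A)) + 2*(kA:ℝ)*π := by
      rw [he_def]; linarith [hA]
    have hcol : ApproxCollinear L A := by
      refine mkcol hOL hOA (θ - e) kL kA _ _ hLe ?_ hAe ?_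
      · rw [abs_le]; constructor
        · linarith [hyL'.1]
        · rw [hd_def] at he; linarith
      · rw [abs_neg, abs_of_pos hdA]
    exact ⟨Complex.exp (θ * Complex.I), Complex.norm_exp_ofReal_mul_I θ, B, L, A, hE,
      h1.2, h1.1, h2, h3, hcol⟩
  · -- splittable: contradiction
    exfalso
    obtain ⟨ε, hε_def⟩ : ∃ x : ℝ, x = min (min ((e - d)/2) ((π - 2*dv B - d)/2)) ((π - 2*dv L)/2) :=
      ⟨_, rfl⟩
    have hε0 : 0 < ε := by
      rw [hε_def]
      apply lt_min (lt_min (by linarith) (by linarith)) (by linarith)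
    have hε1 : ε ≤ (e - d)/2 := hε_def ▸ le_trans (min_le_left _ _) (min_le_left _ _)
    have hε2 : ε ≤ (π - 2*dv B - d)/2 := hε_def ▸ le_trans (min_le_left _ _) (min_le_right _ _)
    have hε3 : ε ≤ (π - 2*dv L)/2 := hε_def ▸ min_le_right _ _
    obtain ⟨θ', hθ'_def⟩ : ∃ x : ℝ, x = θ - d - ε := ⟨_, rfl⟩
    have hsB : 1 < sf B θ' :=
      status_above hOB (y := dv B + d + ε) (k := kB) (by rw [hθ'_def]; linarith [hB])
        (by linarith) (by linarith)
    have hsL : 1 < sf L θ' :=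
      status_above hOL (y := dv L + ε) (k := kL)
        (by rw [hθ'_def, hd_def]; linarith [hL])
        (by linarith) (by linarith)
    have hsA : sf A θ' < -1 :=
      status_below hOA (y := yA + d + ε) (k := kA) (by rw [hθ'_def]; linarith [hA])
        (by linarith) (by linarith)
    exact hstrip (mk_split (p := B) (q := A) (r := L)
      (by rw [hE]; ext w; simp [Set.mem_insert_iff]; tauto) θ' hsB hsA
      (lt_of_lt_of_le hsL (le_abs_self _)))


lemma mkleft {E : Set ℂ} {p q r : ℂ} (hE : E = {p, q, r}) (t : ℝ)
    (hp : p / Complex.exp (t * Complex.I) ∈ HalfStrip)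
    (hq : q / Complex.exp (t * Complex.I) ∈ HalfStrip)
    (hr : r / Complex.exp (t * Complex.I) ∈ HalfStrip) : Goal E := by
  left
  refine ⟨Complex.exp (t * Complex.I), Complex.norm_exp_ofReal_mul_I _, ?_⟩
  intro w hw
  rw [hE] at hw
  rcases hw with rfl | rfl | rfl
  exacts [hp, hq, hr]

/-- Route 1': two points in Σ, third above. -/
lemma r1 {E : Set ℂ} (hstrip : ¬ SplittableByStrip E) (a b k : ℂ) (hE : E = {k, a, b})
    (hOa : OM a) (hOb : OM b) (hOk : OM k) (θ : ℝ) (ka kb kk : ℤ) (ya yb yk : ℝ)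
    (ha : Complex.arg a - θ = ya + 2*(ka:ℝ)*π) (hya : |ya| ≤ dv a)
    (hb : Complex.arg b - θ = yb + 2*(kb:ℝ)*π) (hyb : |yb| ≤ dv b)
    (hk : Complex.arg k - θ = yk + 2*(kk:ℝ)*π)
    (hyk1 : dv k < yk) (hyk2 : yk < π - dv k)
    (hord : yb + dv b ≤ ya + dv a) :
    Goal E := by
  have hπ := Real.pi_pos
  have hda := dv_pos hOa; have hdb := dv_pos hOb; have hdk := dv_pos hOk
  have hda4 := dv_lt hOa; have hdb4 := dv_lt hOb; have hdk4 := dv_lt hOk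
  have hya' := abs_le.1 hya
  have hyb' := abs_le.1 hyb
  obtain ⟨Da, hDa⟩ : ∃ x : ℝ, x = ya + dv a := ⟨_, rfl⟩
  obtain ⟨Db, hDb⟩ : ∃ x : ℝ, x = yb + dv b := ⟨_, rfl⟩
  obtain ⟨Dk, hDk⟩ : ∃ x : ℝ, x = yk - dv k := ⟨_, rfl⟩
  have hDa0 : 0 ≤ Da := by rw [hDa]; linarith [hya'.1]
  have hDb0 : 0 ≤ Db := by rw [hDb]; linarith [hyb'.1]
  have hDa2 : Da ≤ 2 * dv a := by rw [hDa]; linarith [hya'.2]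
  have hDk0 : 0 < Dk := by rw [hDk]; linarith
  have hord' : Db ≤ Da := by rw [hDa, hDb]; exact hord
  rcases le_or_gt Dk Db with h1 | h1
  · -- all three in Σ at θ + Dk
    refine mkleft hE (θ + Dk) ?_ ?_ ?_
    · exact status_in hOk (y := yk - Dk) (k := kk) (by rw [hDk]; linarith [hk])
        (by rw [hDk]; rw [abs_le]; constructor <;> [linarith; linarith])
    · exact status_in hOa (y := ya - Dk) (k := ka) (by linarith [ha])
        (by rw [abs_le]; constructor
            · rw [hDa] at hord'; rw [hDb] at h1; linarith [hya'.1]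
            · linarith [hya'.2])
    · exact status_in hOb (y := yb - Dk) (k := kb) (by linarith [hb])
        (by rw [abs_le]; constructor
            · rw [hDb] at h1; linarith
            · linarith [hyb'.2])
  · rcases le_or_gt Dk Da with h2 | h2
    · -- edge config: core with (B, L, A) = (k, a, b) at θ + Dk
      refine core hstrip k a b hE hOk hOa hOb (θ + Dk) kk ka kb (ya - Dk) (yb - Dk)
        (by rw [hDk]; linarith [hk]) (by linarith [ha]) ?_ (by linarith [hb]) ?_ ?_
      · rw [abs_le]; constructor
        · rw [hDa] at h2; linarith
        · linarith [hya'.2]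
      · -- -π + dv b < yb - Dk
        rw [hDk]; linarith [hyb'.1]
      · -- yb - Dk < -(dv b)
        rw [hDb] at h1; linarith
    · -- splittable: a, b below, k above
      exfalso
      obtain ⟨ε, hε_def⟩ : ∃ x : ℝ,
          x = min (min ((Dk - Da)/2) ((π - 2*dv a)/2)) ((π - 2*dv b - Da)/2) := ⟨_, rfl⟩
      have hε0 : 0 < ε := by
        rw [hε_def]
        apply lt_min (lt_min (by linarith) (by linarith)) (by linarith)
      have hε1 : ε ≤ (Dk - Da)/2 := hε_def ▸ le_trans (min_le_left _ _) (min_le_left _ _)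
      have hε2 : ε ≤ (π - 2*dv a)/2 := hε_def ▸ le_trans (min_le_left _ _) (min_le_right _ _)
      have hε3 : ε ≤ (π - 2*dv b - Da)/2 := hε_def ▸ min_le_right _ _
      have hsa : sf a (θ + Da + ε) < -1 :=
        status_below hOa (y := ya - Da - ε) (k := ka) (by linarith [ha])
          (by rw [hDa]; linarith) (by rw [hDa]; linarith)
      have hsb : sf b (θ + Da + ε) < -1 :=
        status_below hOb (y := yb - Da - ε) (k := kb) (by linarith [hb])
          (by linarith [hyb'.1]) (by rw [hDb] at hord'; linarith)
      have hsk : 1 < sf k (θ + Da + ε) :=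
        status_above hOk (y := yk - Da - ε) (k := kk) (by linarith [hk])
          (by rw [hDk] at h2; linarith) (by linarith)
      exact hstrip (mk_split (p := k) (q := a) (r := b) hE (θ + Da + ε) hsk hsa
        (by rw [abs_of_neg (by linarith)]; linarith))


/-- Window scan: all three points strictly above at `θ0`, with even lifts,
sorted by entry time. -/
lemma scanW {E : Set ℂ} (hstrip : ¬ SplittableByStrip E) (p1 p2 p3 : ℂ)
    (hE : E = {p1, p2, p3}) (hO1 : OM p1) (hO2 : OM p2) (hO3 : OM p3) (θ0 : ℝ)
    (m1 m2 m3 : ℤ) (x1 x2 x3 : ℝ)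
    (h1 : Complex.arg p1 - θ0 = x1 + 2*(m1:ℝ)*π) (h1a : dv p1 < x1) (h1b : x1 < π - dv p1)
    (h2 : Complex.arg p2 - θ0 = x2 + 2*(m2:ℝ)*π) (h2a : dv p2 < x2) (h2b : x2 < π - dv p2)
    (h3 : Complex.arg p3 - θ0 = x3 + 2*(m3:ℝ)*π) (h3a : dv p3 < x3) (h3b : x3 < π - dv p3)
    (hs12 : x1 - dv p1 ≤ x2 - dv p2) (hs23 : x2 - dv p2 ≤ x3 - dv p3) :
    Goal E := by
  have hπ := Real.pi_pos
  have hd1 := dv_pos hO1; have hd2 := dv_pos hO2; have hd3 := dv_pos hO3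
  have hd14 := dv_lt hO1; have hd24 := dv_lt hO2; have hd34 := dv_lt hO3
  by_cases hW1 : x3 - dv p3 ≤ x1 + dv p1 ∧ x3 - dv p3 ≤ x2 + dv p2
  · -- all three in the strip at θ0 + (x3 - dv p3)
    refine mkleft hE (θ0 + (x3 - dv p3)) ?_ ?_ ?_
    · exact status_in hO1 (y := x1 - (x3 - dv p3)) (k := m1) (by linarith [h1])
        (by rw [abs_le]; exact ⟨by linarith [hW1.1], by linarith⟩)
    · exact status_in hO2 (y := x2 - (x3 - dv p3)) (k := m2) (by linarith [h2])
        (by rw [abs_le]; exact ⟨by linarith [hW1.2], by linarith⟩)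
    · exact status_in hO3 (y := dv p3) (k := m3) (by linarith [h3])
        (by rw [abs_of_pos hd3])
  · by_cases hW2 : x2 - dv p2 ≤ x1 + dv p1
    · -- two in strip at θ0 + (x2 - dv p2), p3 above
      have hl3 : x2 - dv p2 < x3 - dv p3 := by
        rcases not_and_or.1 hW1 with h | h
        · push_neg at h; linarith
        · push_neg at h; linarith
      have ha1 : Complex.arg p1 - (θ0 + (x2 - dv p2)) = (x1 - (x2 - dv p2)) + 2*(m1:ℝ)*π := by
        linarith [h1]
      have hya1 : |x1 - (x2 - dv p2)| ≤ dv p1 := by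
        rw [abs_le]; exact ⟨by linarith, by linarith⟩
      have ha2 : Complex.arg p2 - (θ0 + (x2 - dv p2)) = dv p2 + 2*(m2:ℝ)*π := by
        linarith [h2]
      have hya2 : |dv p2| ≤ dv p2 := by rw [abs_of_pos hd2]
      have ha3 : Complex.arg p3 - (θ0 + (x2 - dv p2)) = (x3 - (x2 - dv p2)) + 2*(m3:ℝ)*π := by
        linarith [h3]
      have hk1 : dv p3 < x3 - (x2 - dv p2) := by linarith
      have hk2 : x3 - (x2 - dv p2) < π - dv p3 := by linarith
      rcases le_total (dv p2 + dv p2) ((x1 - (x2 - dv p2)) + dv p1) with hord | hord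
      · exact r1 hstrip p1 p2 p3 (by rw [hE]; ext w; simp [Set.mem_insert_iff]; tauto)
          hO1 hO2 hO3 (θ0 + (x2 - dv p2)) m1 m2 m3 _ _ _
          ha1 hya1 ha2 hya2 ha3 hk1 hk2 (by linarith)
      · exact r1 hstrip p2 p1 p3 (by rw [hE]; ext w; simp [Set.mem_insert_iff]; tauto)
          hO2 hO1 hO3 (θ0 + (x2 - dv p2)) m2 m1 m3 _ _ _
          ha2 hya2 ha1 hya1 ha3 hk1 hk2 (by linarith)
    · -- splittable: p1 below, p2 p3 above
      exfalso
      push_neg at hW2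
      obtain ⟨ε, hε_def⟩ : ∃ x : ℝ,
          x = min (((x2 - dv p2) - (x1 + dv p1))/2) ((π - 2*dv p1)/2) := ⟨_, rfl⟩
      have hε0 : 0 < ε := by
        rw [hε_def]; apply lt_min (by linarith) (by linarith)
      have hε1 : ε ≤ (((x2 - dv p2) - (x1 + dv p1)))/2 := hε_def ▸ min_le_left _ _
      have hε2 : ε ≤ (π - 2*dv p1)/2 := hε_def ▸ min_le_right _ _
      have hb1 : sf p1 (θ0 + (x1 + dv p1) + ε) < -1 :=
        status_below hO1 (y := x1 - (x1 + dv p1) - ε) (k := m1) (by linarith [h1])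
          (by linarith) (by linarith)
      have hb2 : 1 < sf p2 (θ0 + (x1 + dv p1) + ε) :=
        status_above hO2 (y := x2 - (x1 + dv p1) - ε) (k := m2) (by linarith [h2])
          (by linarith) (by linarith)
      have hb3 : 1 < sf p3 (θ0 + (x1 + dv p1) + ε) :=
        status_above hO3 (y := x3 - (x1 + dv p1) - ε) (k := m3) (by linarith [h3])
          (by linarith) (by linarith)
      exact hstrip (mk_split (p := p2) (q := p1) (r := p3)
        (by rw [hE]; ext w; simp [Set.mem_insert_iff]; tauto)
        (θ0 + (x1 + dv p1) + ε) hb2 hb1 (lt_of_lt_of_le hb3 (le_abs_self _)))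


/-- Sorting wrapper for `scanW`. -/
lemma scanWsort {E : Set ℂ} (hstrip : ¬ SplittableByStrip E) (p1 p2 p3 : ℂ)
    (hE : E = {p1, p2, p3}) (hO1 : OM p1) (hO2 : OM p2) (hO3 : OM p3) (θ0 : ℝ)
    (m1 m2 m3 : ℤ) (x1 x2 x3 : ℝ)
    (h1 : Complex.arg p1 - θ0 = x1 + 2*(m1:ℝ)*π) (h1a : dv p1 < x1) (h1b : x1 < π - dv p1)
    (h2 : Complex.arg p2 - θ0 = x2 + 2*(m2:ℝ)*π) (h2a : dv p2 < x2) (h2b : x2 < π - dv p2)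
    (h3 : Complex.arg p3 - θ0 = x3 + 2*(m3:ℝ)*π) (h3a : dv p3 < x3) (h3b : x3 < π - dv p3) :
    Goal E := by
  rcases le_total (x1 - dv p1) (x2 - dv p2) with a12 | a12 <;>
    rcases le_total (x1 - dv p1) (x3 - dv p3) with a13 | a13 <;>
      rcases le_total (x2 - dv p2) (x3 - dv p3) with a23 | a23
  · exact scanW hstrip p1 p2 p3 hE hO1 hO2 hO3 θ0 m1 m2 m3 x1 x2 x3
      h1 h1a h1b h2 h2a h2b h3 h3a h3b a12 a23
  · exact scanW hstrip p1 p3 p2 (by rw [hE]; ext w; simp [Set.mem_insert_iff]; tauto)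
      hO1 hO3 hO2 θ0 m1 m3 m2 x1 x3 x2 h1 h1a h1b h3 h3a h3b h2 h2a h2b a13 a23
  · exact scanW hstrip p1 p2 p3 hE hO1 hO2 hO3 θ0 m1 m2 m3 x1 x2 x3
      h1 h1a h1b h2 h2a h2b h3 h3a h3b a12 a23
  · exact scanW hstrip p3 p1 p2 (by rw [hE]; ext w; simp [Set.mem_insert_iff]; tauto)
      hO3 hO1 hO2 θ0 m3 m1 m2 x3 x1 x2 h3 h3a h3b h1 h1a h1b h2 h2a h2b a13 a12
  · exact scanW hstrip p2 p1 p3 (by rw [hE]; ext w; simp [Set.mem_insert_iff]; tauto)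
      hO2 hO1 hO3 θ0 m2 m1 m3 x2 x1 x3 h2 h2a h2b h1 h1a h1b h3 h3a h3b a12 a13
  · exact scanW hstrip p2 p1 p3 (by rw [hE]; ext w; simp [Set.mem_insert_iff]; tauto)
      hO2 hO1 hO3 θ0 m2 m1 m3 x2 x1 x3 h2 h2a h2b h1 h1a h1b h3 h3a h3b a12 a13
  · exact scanW hstrip p2 p3 p1 (by rw [hE]; ext w; simp [Set.mem_insert_iff]; tauto)
      hO2 hO3 hO1 θ0 m2 m3 m1 x2 x3 x1 h2 h2a h2b h3 h3a h3b h1 h1a h1b a23 a13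
  · exact scanW hstrip p3 p2 p1 (by rw [hE]; ext w; simp [Set.mem_insert_iff]; tauto)
      hO3 hO2 hO1 θ0 m3 m2 m1 x3 x2 x1 h3 h3a h3b h2 h2a h2b h1 h1a h1b a23 a12


lemma abs_sin_int_pi (x : ℝ) (k : ℤ) : |Real.sin (x + (k:ℝ)*π)| = |Real.sin x| := by
  rcases Int.even_or_odd k with ⟨t, ht⟩ | ⟨t, ht⟩
  · rw [ht, show x + ((t+t : ℤ):ℝ)*π = x + (t:ℝ)*(2*π) by push_cast; ring,
      Real.sin_add_int_mul_two_pi]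
  · rw [ht, show x + ((2*t+1 : ℤ):ℝ)*π = (x + π) + (t:ℝ)*(2*π) by push_cast; ring,
      Real.sin_add_int_mul_two_pi, Real.sin_add_pi, abs_neg]

lemma abs_sf (z : ℂ) (θ : ℝ) :
    |sf z θ| = ‖z‖ * |Real.sin (Complex.arg z - θ)| := by
  rw [sf_eq, abs_mul, abs_of_nonneg (norm_nonneg _)]

lemma lift_out {z : ℂ} (hz : OM z) {θ0 : ℝ} (h : 1 < |sf z θ0|) :
    ∃ (k : ℤ) (x : ℝ), Complex.arg z - θ0 = x + (k:ℝ)*π ∧ dv z < x ∧ x < π - dv z := by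
  have hπ := Real.pi_pos
  have hd0 := dv_pos hz
  have hd2 := dv_lt_half hz
  obtain ⟨y, hy⟩ : ∃ y : ℝ, y = Complex.arg z - θ0 := ⟨_, rfl⟩
  obtain ⟨k, hk⟩ : ∃ k : ℤ, k = ⌊y / π⌋ := ⟨_, rfl⟩
  obtain ⟨x, hx⟩ : ∃ x : ℝ, x = y - k*π := ⟨_, rfl⟩
  have hx0 : 0 ≤ x := by
    rw [hx]
    have : (k:ℝ) ≤ y / π := hk ▸ Int.floor_le (y / π)
    have := (le_div_iff₀ hπ).1 this
    linarith
  have hx1 : x < π := by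
    rw [hx]
    have : y / π < (k:ℝ) + 1 := hk ▸ Int.lt_floor_add_one (y / π)
    have := (div_lt_iff₀ hπ).1 this
    nlinarith
  have hsin : 1 < ‖z‖ * Real.sin x := by
    have h2 := abs_sf z θ0
    rw [← hy] at h2
    rw [show y = x + (k:ℝ)*π by rw [hx]; ring] at h2
    rw [abs_sin_int_pi] at h2
    rw [abs_of_nonneg (Real.sin_nonneg_of_nonneg_of_le_pi hx0 hx1.le)] at h2
    linarith [h, h2.symm.le, h2.le]
  have hgt : dv z < x := by
    by_contra hc
    push_neg at hc
    have : Real.sin x ≤ Real.sin (dv z) :=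
      Real.strictMonoOn_sin.monotoneOn
        (Set.mem_Icc.2 ⟨by linarith, by linarith⟩)
        (Set.mem_Icc.2 ⟨by linarith, by linarith⟩) hc
    have h4 := mul_le_mul_of_nonneg_left this (norm_nonneg z)
    rw [R_sin_dv hz] at h4
    linarith
  have hlt : x < π - dv z := by
    by_contra hc
    push_neg at hc
    have hps : Real.sin x = Real.sin (π - x) := (Real.sin_pi_sub x).symm
    have : Real.sin (π - x) ≤ Real.sin (dv z) :=
      Real.strictMonoOn_sin.monotoneOn
        (Set.mem_Icc.2 ⟨by linarith, by linarith⟩)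
        (Set.mem_Icc.2 ⟨by linarith, by linarith⟩) (by linarith)
    rw [← hps] at this
    have h4 := mul_le_mul_of_nonneg_left this (norm_nonneg z)
    rw [R_sin_dv hz] at h4
    linarith
  exact ⟨k, x, by rw [hx, hy]; ring, hgt, hlt⟩

lemma even_above {z : ℂ} (hz : OM z) {θ0 x : ℝ} {k t : ℤ}
    (e : Complex.arg z - θ0 = x + (k:ℝ)*π) (he : k = t + t)
    (hx1 : dv z < x) (hx2 : x < π - dv z) : 1 < sf z θ0 :=
  status_above hz (y := x) (k := t)
    (by rw [e, he]; push_cast; ring) hx1 hx2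

lemma odd_below {z : ℂ} (hz : OM z) {θ0 x : ℝ} {k t : ℤ}
    (e : Complex.arg z - θ0 = x + (k:ℝ)*π) (ho : k = 2*t + 1)
    (hx1 : dv z < x) (hx2 : x < π - dv z) : sf z θ0 < -1 := by
  have hπ := Real.pi_pos
  exact status_below hz (y := x - π) (k := t + 1)
    (by rw [e, ho]; push_cast; ring) (by linarith) (by linarith)

lemma even_lift {z : ℂ} {θ0 x : ℝ} {k t : ℤ}
    (e : Complex.arg z - θ0 = x + (k:ℝ)*π) (he : k = t + t) :
    Complex.arg z - θ0 = x + 2*(t:ℝ)*π := by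
  rw [e, he]; push_cast; ring

lemma odd_lift {z : ℂ} {θ0 x : ℝ} {k t : ℤ}
    (e : Complex.arg z - θ0 = x + (k:ℝ)*π) (ho : k = 2*t + 1) :
    Complex.arg z - (θ0 + π) = x + 2*(t:ℝ)*π := by
  rw [show Complex.arg z - (θ0 + π) = (Complex.arg z - θ0) - π by ring, e, ho]
  push_cast; ring

/-- After finding an all-out angle. -/
lemma afterOut {E : Set ℂ} (hstrip : ¬ SplittableByStrip E) (p q r : ℂ)
    (hE : E = {p, q, r}) (hOp : OM p) (hOq : OM q) (hOr : OM r) (θ0 : ℝ)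
    (hp : 1 < |sf p θ0|) (hq : 1 < |sf q θ0|) (hr : 1 < |sf r θ0|) :
    Goal E := by
  obtain ⟨kp, xp, ep, ep1, ep2⟩ := lift_out hOp hp
  obtain ⟨kq, xq, eq', eq1, eq2⟩ := lift_out hOq hq
  obtain ⟨kr, xr, er, er1, er2⟩ := lift_out hOr hr
  rcases Int.even_or_odd kp with ⟨tp, htp⟩ | ⟨tp, htp⟩ <;>
    rcases Int.even_or_odd kq with ⟨tq, htq⟩ | ⟨tq, htq⟩ <;>
      rcases Int.even_or_odd kr with ⟨tr, htr⟩ | ⟨tr, htr⟩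
  · -- eee
    exact scanWsort hstrip p q r hE hOp hOq hOr θ0 tp tq tr xp xq xr
      (even_lift ep htp) ep1 ep2 (even_lift eq' htq) eq1 eq2 (even_lift er htr) er1 er2
  · -- eeo : q even above, r odd below
    exact absurd (mk_split (p := q) (q := r) (r := p)
      (by rw [hE]; ext w; simp [Set.mem_insert_iff]; tauto) θ0
      (even_above hOq eq' htq eq1 eq2) (odd_below hOr er htr er1 er2) hp) hstrip
  · -- eoe : p even above, q odd below
    exact absurd (mk_split (p := p) (q := q) (r := r) hE θ0
      (even_above hOp ep htp ep1 ep2) (odd_below hOq eq' htq eq1 eq2) hr) hstrip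
  · -- eoo : p even above, q odd below
    exact absurd (mk_split (p := p) (q := q) (r := r) hE θ0
      (even_above hOp ep htp ep1 ep2) (odd_below hOq eq' htq eq1 eq2) hr) hstrip
  · -- oee : q even above, p odd below
    exact absurd (mk_split (p := q) (q := p) (r := r)
      (by rw [hE]; ext w; simp [Set.mem_insert_iff]; tauto) θ0
      (even_above hOq eq' htq eq1 eq2) (odd_below hOp ep htp ep1 ep2) hr) hstrip
  · -- oeo : q even above, p odd below
    exact absurd (mk_split (p := q) (q := p) (r := r)
      (by rw [hE]; ext w; simp [Set.mem_insert_iff]; tauto) θ0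
      (even_above hOq eq' htq eq1 eq2) (odd_below hOp ep htp ep1 ep2) hr) hstrip
  · -- ooe : r even above, p odd below
    exact absurd (mk_split (p := r) (q := p) (r := q)
      (by rw [hE]; ext w; simp [Set.mem_insert_iff]; tauto) θ0
      (even_above hOr er htr er1 er2) (odd_below hOp ep htp ep1 ep2) hq) hstrip
  · -- ooo : shift by π
    exact scanWsort hstrip p q r hE hOp hOq hOr (θ0 + π) tp tq tr xp xq xr
      (odd_lift ep htp) ep1 ep2 (odd_lift eq' htq) eq1 eq2 (odd_lift er htr) er1 er2


section Numeric

lemma sin_cube_lb {h : ℝ} (h0 : 0 < h) (h1 : h ≤ 1) : h - h^3/4 ≤ Real.sin h :=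
  by have := Real.sin_gt_sub_cube h0; nlinarith [pow_pos h0 3]

lemma sin_double_lb {h s c : ℝ} (h0 : 0 < h) (h1 : h ≤ 1)
    (hs : s ≤ Real.sin h) (hc : c ≤ Real.cos h) (hs0 : 0 ≤ s) (hc0 : 0 ≤ c) :
    2*s*c ≤ Real.sin (2*h) := by
  rw [Real.sin_two_mul]
  nlinarith [hs, hc]

lemma s355 : (0.3438:ℝ) ≤ Real.sin 0.355 := by
  have h1 := sin_cube_lb (h := 0.1775) (by norm_num) (by norm_num)
  have h2 : (1:ℝ) - 0.1775^2/2 ≤ Real.cos 0.1775 := Real.one_sub_sq_div_two_le_cos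
  have := sin_double_lb (h := 0.1775) (s := 0.1775 - 0.1775^3/4) (c := 1 - 0.1775^2/2)
    (by norm_num) (by norm_num) h1 h2 (by norm_num) (by norm_num)
  calc (0.3438:ℝ) ≤ 2*(0.1775 - 0.1775^3/4)*(1 - 0.1775^2/2) := by norm_num
    _ ≤ Real.sin (2*0.1775) := this
    _ = Real.sin 0.355 := by norm_num

lemma s062 : (0.5774:ℝ) ≤ Real.sin 0.62 := by
  have h1 := sin_cube_lb (h := 0.155) (by norm_num) (by norm_num)
  have h2 : (1:ℝ) - 0.155^2/2 ≤ Real.cos 0.155 := Real.one_sub_sq_div_two_le_cos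
  have h3 := sin_double_lb (h := 0.155) (s := 0.155 - 0.155^3/4) (c := 1 - 0.155^2/2)
    (by norm_num) (by norm_num) h1 h2 (by norm_num) (by norm_num)
  have h3' : (0.3044:ℝ) ≤ Real.sin 0.31 := by
    calc (0.3044:ℝ) ≤ 2*(0.155 - 0.155^3/4)*(1 - 0.155^2/2) := by norm_num
      _ ≤ Real.sin (2*0.155) := h3
      _ = Real.sin 0.31 := by norm_num
  have h4 : (1:ℝ) - 0.31^2/2 ≤ Real.cos 0.31 := Real.one_sub_sq_div_two_le_cos
  have h5 := sin_double_lb (h := 0.31) (s := 0.3044) (c := 1 - 0.31^2/2)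
    (by norm_num) (by norm_num) h3' h4 (by norm_num) (by norm_num)
  calc (0.5774:ℝ) ≤ 2*0.3044*(1 - 0.31^2/2) := by norm_num
    _ ≤ Real.sin (2*0.31) := h5
    _ = Real.sin 0.62 := by norm_num

lemma s5957 : (0.5598:ℝ) ≤ Real.sin 0.5957 := by
  have h1 := sin_cube_lb (h := 0.1489250) (by norm_num) (by norm_num)
  have h2 : (1:ℝ) - 0.1489250^2/2 ≤ Real.cos 0.1489250 := Real.one_sub_sq_div_two_le_cos
  have h3 := sin_double_lb (h := 0.1489250) (s := 0.1489250 - 0.1489250^3/4)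
    (c := 1 - 0.1489250^2/2) (by norm_num) (by norm_num) h1 h2 (by norm_num) (by norm_num)
  have h3' : (0.29291:ℝ) ≤ Real.sin 0.29785 := by
    calc (0.29291:ℝ) ≤ 2*(0.1489250 - 0.1489250^3/4)*(1 - 0.1489250^2/2) := by norm_num
      _ ≤ Real.sin (2*0.1489250) := h3
      _ = Real.sin 0.29785 := by norm_num
  have h4 : (1:ℝ) - 0.29785^2/2 ≤ Real.cos 0.29785 := Real.one_sub_sq_div_two_le_cos
  have h5 := sin_double_lb (h := 0.29785) (s := 0.29291) (c := 1 - 0.29785^2/2)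
    (by norm_num) (by norm_num) h3' h4 (by norm_num) (by norm_num)
  calc (0.5598:ℝ) ≤ 2*0.29291*(1 - 0.29785^2/2) := by norm_num
    _ ≤ Real.sin (2*0.29785) := h5
    _ = Real.sin 0.5957 := by norm_num

lemma s7152 : (0.6534:ℝ) ≤ Real.sin 0.7152 := by
  have h1 := sin_cube_lb (h := 0.1788) (by norm_num) (by norm_num)
  have h2 : (1:ℝ) - 0.1788^2/2 ≤ Real.cos 0.1788 := Real.one_sub_sq_div_two_le_cos
  have h3 := sin_double_lb (h := 0.1788) (s := 0.1788 - 0.1788^3/4) (c := 1 - 0.1788^2/2)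
    (by norm_num) (by norm_num) h1 h2 (by norm_num) (by norm_num)
  have h3' : (0.34907:ℝ) ≤ Real.sin 0.3576 := by
    calc (0.34907:ℝ) ≤ 2*(0.1788 - 0.1788^3/4)*(1 - 0.1788^2/2) := by norm_num
      _ ≤ Real.sin (2*0.1788) := h3
      _ = Real.sin 0.3576 := by norm_num
  have h4 : (1:ℝ) - 0.3576^2/2 ≤ Real.cos 0.3576 := Real.one_sub_sq_div_two_le_cos
  have h5 := sin_double_lb (h := 0.3576) (s := 0.34907) (c := 1 - 0.3576^2/2)
    (by norm_num) (by norm_num) h3' h4 (by norm_num) (by norm_num)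
  calc (0.6534:ℝ) ≤ 2*0.34907*(1 - 0.3576^2/2) := by norm_num
    _ ≤ Real.sin (2*0.3576) := h5
    _ = Real.sin 0.7152 := by norm_num

lemma s445 : (0.4286:ℝ) ≤ Real.sin 0.445 := by
  have h1 := sin_cube_lb (h := 0.2225) (by norm_num) (by norm_num)
  have h2 : (1:ℝ) - 0.2225^2/2 ≤ Real.cos 0.2225 := Real.one_sub_sq_div_two_le_cos
  have h3 := sin_double_lb (h := 0.2225) (s := 0.2225 - 0.2225^3/4) (c := 1 - 0.2225^2/2)
    (by norm_num) (by norm_num) h1 h2 (by norm_num) (by norm_num)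
  calc (0.4286:ℝ) ≤ 2*(0.2225 - 0.2225^3/4)*(1 - 0.2225^2/2) := by norm_num
    _ ≤ Real.sin (2*0.2225) := h3
    _ = Real.sin 0.445 := by norm_num

lemma s0555 : (0.05516:ℝ) ≤ Real.sin 0.0555 := by
  have h1 := sin_cube_lb (h := 0.0555) (by norm_num) (by norm_num)
  calc (0.05516:ℝ) ≤ 0.0555 - 0.0555^3/4 := by norm_num
    _ ≤ Real.sin 0.0555 := h1

end Numeric


section Measure

open MeasureTheory

lemma strip_iff {z : ℂ} (hz : OM z) {u : ℝ} (hu : |u| ≤ π/2) :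
    ‖z‖ * |Real.sin u| ≤ 1 ↔ |u| ≤ dv z := by
  have hπ := Real.pi_pos
  have hd0 := dv_pos hz
  have hd2 := dv_lt_half hz
  have hu' := abs_le.1 hu
  have habs : |Real.sin u| = Real.sin |u| := by
    rcases le_total 0 u with h | h
    · rw [abs_of_nonneg h,
        abs_of_nonneg (Real.sin_nonneg_of_nonneg_of_le_pi h (by linarith))]
    · have h5 : Real.sin u ≤ 0 := by
        have := Real.sin_nonneg_of_nonneg_of_le_pi (x := -u) (by linarith) (by linarith)
        rw [Real.sin_neg] at this; linarith
      rw [abs_of_nonpos h, Real.sin_neg, abs_of_nonpos h5]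
  rw [habs]
  constructor
  · intro h
    by_contra hc
    push_neg at hc
    have : Real.sin (dv z) < Real.sin |u| :=
      Real.strictMonoOn_sin
        (Set.mem_Icc.2 ⟨by linarith, by linarith⟩)
        (Set.mem_Icc.2 ⟨by linarith [abs_nonneg u], by linarith⟩) hc
    have h4 := mul_lt_mul_of_pos_left this (R_pos hz)
    rw [R_sin_dv hz] at h4
    linarith
  · intro h
    have : Real.sin |u| ≤ Real.sin (dv z) :=
      Real.strictMonoOn_sin.monotoneOn
        (Set.mem_Icc.2 ⟨by linarith [abs_nonneg u], by linarith⟩)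
        (Set.mem_Icc.2 ⟨by linarith, by linarith⟩) h
    have h4 := mul_le_mul_of_nonneg_left this (norm_nonneg z)
    rw [R_sin_dv hz] at h4
    linarith

lemma sf_cont (z : ℂ) : Continuous fun θ => sf z θ := by
  have : (fun θ => sf z θ) = fun θ => ‖z‖ * Real.sin (Complex.arg z - θ) :=
    funext (sf_eq z)
  rw [this]
  fun_prop

lemma sf_periodic (z : ℂ) (θ : ℝ) : |sf z (θ + π)| = |sf z θ| := by
  rw [abs_sf, abs_sf, show Complex.arg z - (θ + π) = (Complex.arg z - θ) + (-1:ℤ)*π by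
    push_cast; ring, abs_sin_int_pi]

lemma vol_bound {z : ℂ} (hz : OM z) :
    volume ({θ : ℝ | |sf z θ| ≤ 1} ∩ Set.Icc 0 π) ≤ ENNReal.ofReal (2 * dv z) := by
  have hπ := Real.pi_pos
  have hd0 := dv_pos hz
  have hd2 := dv_lt_half hz
  obtain ⟨k, hk⟩ : ∃ k : ℤ, k = round (Complex.arg z / π) := ⟨_, rfl⟩
  obtain ⟨α, hα⟩ : ∃ a : ℝ, a = Complex.arg z - k*π := ⟨_, rfl⟩
  have hα2 : |α| ≤ π/2 := by
    rw [hα, hk]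
    have h1 := abs_sub_round (Complex.arg z / π)
    have h2 : Complex.arg z - (round (Complex.arg z / π)) * π
        = (Complex.arg z / π - round (Complex.arg z / π)) * π := by
      rw [sub_mul, div_mul_cancel₀ _ (ne_of_gt hπ)]
    rw [h2, abs_mul, abs_of_pos hπ]
    calc |Complex.arg z / π - ↑(round (Complex.arg z / π))| * π ≤ (1/2) * π := by
          apply mul_le_mul_of_nonneg_right h1 hπ.le
      _ = π/2 := by ring
  set C : Set ℝ := {θ : ℝ | |sf z θ| ≤ 1} with hC
  have hCmeas : MeasurableSet C := by
    have : C = (fun θ => |sf z θ|) ⁻¹' (Set.Iic 1) := rfl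
    rw [this]
    exact ((sf_cont z).abs.measurable) measurableSet_Iic
  have hmem : ∀ θ : ℝ, θ ∈ C ↔ ‖z‖ * |Real.sin (α - θ)| ≤ 1 := by
    intro θ
    rw [hC]
    simp only [Set.mem_setOf_eq]
    rw [abs_sf, show Complex.arg z - θ = (α - θ) + (k:ℝ)*π by rw [hα]; ring,
      abs_sin_int_pi]
  have hwin : C ∩ Set.Icc (α - π/2) (α + π/2) = Set.Icc (α - dv z) (α + dv z) := by
    ext θ
    simp only [Set.mem_inter_iff, Set.mem_Icc]
    constructor
    · rintro ⟨h1, h2, h3⟩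
      have hu : |α - θ| ≤ π/2 := by rw [abs_le]; constructor <;> linarith
      have := (strip_iff hz hu).1 ((hmem θ).1 h1)
      have := abs_le.1 this
      constructor <;> linarith [this.1, this.2]
    · rintro ⟨h1, h2⟩
      have hu : |α - θ| ≤ π/2 := by rw [abs_le]; constructor <;> linarith
      refine ⟨(hmem θ).2 ((strip_iff hz hu).2 ?_), by linarith, by linarith⟩
      rw [abs_le]; constructor <;> linarith
  -- split [0, π] at α + π/2
  have hw0 : 0 ≤ α + π/2 := by linarith [abs_le.1 hα2|>.1]
  have hwπ : α + π/2 ≤ π := by linarith [abs_le.1 hα2|>.2]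
  have hsplit : C ∩ Set.Icc 0 π ⊆
      (C ∩ Set.Icc 0 (α + π/2)) ∪ (C ∩ Set.Ioc (α + π/2) π) := by
    rintro θ ⟨h1, h2, h3⟩
    rcases le_or_gt θ (α + π/2) with h | h
    · exact Or.inl ⟨h1, h2, h⟩
    · exact Or.inr ⟨h1, h, h3⟩
  have hA1 : C ∩ Set.Icc 0 (α + π/2) ⊆
      Set.Icc (α - dv z) (α + dv z) ∩ Set.Icc 0 (α + π/2) := by
    rintro θ ⟨h1, h2, h3⟩
    have : θ ∈ C ∩ Set.Icc (α - π/2) (α + π/2) := ⟨h1, by linarith, h3⟩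
    rw [hwin] at this
    exact ⟨this, h2, h3⟩
  -- translate the second piece
  have hA2 : (fun t => t + π) ⁻¹' (C ∩ Set.Ioc (α + π/2) π) ⊆
      Set.Icc (α - dv z) (α + dv z) ∩ Set.Icc (α - π/2) 0 := by
    rintro t ht
    simp only [Set.mem_preimage, Set.mem_inter_iff, Set.mem_Ioc] at ht
    obtain ⟨h1, h2, h3⟩ := ht
    have h1' : t ∈ C := by
      have := sf_periodic z t
      simp only [hC, Set.mem_setOf_eq] at h1 ⊢
      rw [← this]; exact h1
    have : t ∈ C ∩ Set.Icc (α - π/2) (α + π/2) := ⟨h1', by constructor <;> linarith⟩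
    rw [hwin] at this
    refine ⟨this, ?_⟩
    constructor <;> linarith
  calc volume (C ∩ Set.Icc 0 π)
      ≤ volume ((C ∩ Set.Icc 0 (α + π/2)) ∪ (C ∩ Set.Ioc (α + π/2) π)) :=
        measure_mono hsplit
    _ ≤ volume (C ∩ Set.Icc 0 (α + π/2)) + volume (C ∩ Set.Ioc (α + π/2) π) :=
        measure_union_le _ _
    _ = volume (C ∩ Set.Icc 0 (α + π/2))
        + volume ((fun t => t + π) ⁻¹' (C ∩ Set.Ioc (α + π/2) π)) := by
        rw [measure_preimage_add_right]
    _ ≤ volume (Set.Icc (α - dv z) (α + dv z) ∩ Set.Icc 0 (α + π/2))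
        + volume (Set.Icc (α - dv z) (α + dv z) ∩ Set.Icc (α - π/2) 0) := by
        exact add_le_add (measure_mono hA1) (measure_mono hA2)
    _ ≤ ENNReal.ofReal (2 * dv z) := by
        have hmeas1 : MeasurableSet (Set.Icc (α - dv z) (α + dv z) ∩ Set.Icc (α - π/2) 0) :=
          (measurableSet_Icc.inter measurableSet_Icc)
        have := measure_union_add_inter (μ := volume)
          (Set.Icc (α - dv z) (α + dv z) ∩ Set.Icc 0 (α + π/2)) hmeas1
        have hsub : (Set.Icc (α - dv z) (α + dv z) ∩ Set.Icc 0 (α + π/2))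
            ∪ (Set.Icc (α - dv z) (α + dv z) ∩ Set.Icc (α - π/2) 0)
            ⊆ Set.Icc (α - dv z) (α + dv z) := by
          rintro θ (⟨h1, _⟩ | ⟨h1, _⟩) <;> exact h1
        have hcap : (Set.Icc (α - dv z) (α + dv z) ∩ Set.Icc 0 (α + π/2))
            ∩ (Set.Icc (α - dv z) (α + dv z) ∩ Set.Icc (α - π/2) 0) ⊆ {0} := by
          rintro θ ⟨⟨_, h2⟩, ⟨_, h4⟩⟩
          simp only [Set.mem_singleton_iff]
          have := h2.1; have := h4.2
          linarith [le_antisymm h4.2 h2.1]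
        have hv1 : volume ((Set.Icc (α - dv z) (α + dv z) ∩ Set.Icc 0 (α + π/2))
            ∩ (Set.Icc (α - dv z) (α + dv z) ∩ Set.Icc (α - π/2) 0)) = 0 :=
          measure_mono_null hcap (measure_singleton 0)
        have hv2 : volume ((Set.Icc (α - dv z) (α + dv z) ∩ Set.Icc 0 (α + π/2))
            ∪ (Set.Icc (α - dv z) (α + dv z) ∩ Set.Icc (α - π/2) 0))
            ≤ ENNReal.ofReal (2 * dv z) := by
          refine le_trans (measure_mono hsub) ?_
          rw [Real.volume_Icc]
          apply le_of_eq
          congr 1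
          ring
        calc volume (Set.Icc (α - dv z) (α + dv z) ∩ Set.Icc 0 (α + π/2))
            + volume (Set.Icc (α - dv z) (α + dv z) ∩ Set.Icc (α - π/2) 0)
            = volume ((Set.Icc (α - dv z) (α + dv z) ∩ Set.Icc 0 (α + π/2))
              ∪ (Set.Icc (α - dv z) (α + dv z) ∩ Set.Icc (α - π/2) 0))
              + volume ((Set.Icc (α - dv z) (α + dv z) ∩ Set.Icc 0 (α + π/2))
              ∩ (Set.Icc (α - dv z) (α + dv z) ∩ Set.Icc (α - π/2) 0)) := this.symm
          _ ≤ ENNReal.ofReal (2 * dv z) + 0 := add_le_add hv2 (le_of_eq hv1)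
          _ = ENNReal.ofReal (2 * dv z) := by rw [add_zero]

lemma measure_bound {p q r : ℂ} (hp : OM p) (hq : OM q) (hr : OM r)
    (H : ∀ θ : ℝ, |sf p θ| ≤ 1 ∨ |sf q θ| ≤ 1 ∨ |sf r θ| ≤ 1) :
    π ≤ 2*(dv p) + 2*(dv q) + 2*(dv r) := by
  have hπ := Real.pi_pos
  have hcover : Set.Icc (0:ℝ) π ⊆
      ({θ : ℝ | |sf p θ| ≤ 1} ∩ Set.Icc 0 π) ∪ (({θ : ℝ | |sf q θ| ≤ 1} ∩ Set.Icc 0 π)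
        ∪ ({θ : ℝ | |sf r θ| ≤ 1} ∩ Set.Icc 0 π)) := by
    intro θ hθ
    rcases H θ with h | h | h
    · exact Or.inl ⟨h, hθ⟩
    · exact Or.inr (Or.inl ⟨h, hθ⟩)
    · exact Or.inr (Or.inr ⟨h, hθ⟩)
  have h1 : ENNReal.ofReal π ≤ ENNReal.ofReal (2*dv p) + (ENNReal.ofReal (2*dv q)
      + ENNReal.ofReal (2*dv r)) := by
    calc ENNReal.ofReal π = volume (Set.Icc (0:ℝ) π) := by
          rw [Real.volume_Icc, sub_zero]
      _ ≤ _ := measure_mono hcover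
      _ ≤ _ := le_trans (measure_union_le _ _)
          (add_le_add (vol_bound hp) (le_trans (measure_union_le _ _)
            (add_le_add (vol_bound hq) (vol_bound hr))))
  have hdp := dv_pos hp; have hdq := dv_pos hq; have hdr := dv_pos hr
  rw [← ENNReal.ofReal_add (by linarith) (by linarith), ← ENNReal.ofReal_add
    (by linarith) (by linarith)] at h1
  have := (ENNReal.ofReal_le_ofReal_iff (by linarith)).1 h1
  linarith

end Measure


section NoCover

lemma abs_sin_eq {u : ℝ} (hu : |u| ≤ π) : |Real.sin u| = Real.sin |u| := by
  have hu' := abs_le.1 hu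
  rcases le_total 0 u with h | h
  · rw [abs_of_nonneg h,
      abs_of_nonneg (Real.sin_nonneg_of_nonneg_of_le_pi h (by linarith))]
  · have h5 : Real.sin u ≤ 0 := by
      have := Real.sin_nonneg_of_nonneg_of_le_pi (x := -u) (by linarith) (by linarith)
      rw [Real.sin_neg] at this; linarith
    rw [abs_of_nonpos h, Real.sin_neg, abs_of_nonpos h5]

lemma sqrt3_lb : (1.7320508:ℝ) ≤ Real.sqrt 3 := by
  nlinarith [Real.sq_sqrt (by norm_num : (0:ℝ) ≤ 3), Real.sqrt_nonneg 3]

lemma sf_zero (z : ℂ) : sf z 0 = z.im := by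
  unfold sf
  norm_num

lemma low_R2 {z : ℂ} (hz : OM z) (h : |z.im| ≤ 1) :
    5 + 2*Real.sqrt 3 ≤ (‖z‖)^2 := by
  have hs := sqrt3_lb
  have hs2 : (Real.sqrt 3)^2 = 3 := Real.sq_sqrt (by norm_num)
  have hre := abs_nonneg z.re
  have him : z.im^2 ≤ 1 := by nlinarith [abs_le.1 h, abs_nonneg z.im]
  have hOM : 3 + 2*|z.re| ≤ z.re^2 + z.im^2 := by
    have := hz; unfold OM Complex.normSq at this
    simp only [MonoidWithZeroHom.coe_mk, ZeroHom.coe_mk] at this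
    nlinarith [this]
  have hre2 : |z.re|^2 = z.re^2 := sq_abs z.re
  have hbig : 1 + Real.sqrt 3 ≤ |z.re| := by nlinarith
  rw [Complex.sq_norm]
  have : 3 + 2*|z.re| ≤ Complex.normSq z := hz
  nlinarith

lemma R_lb_low {z : ℂ} (hz : OM z) (h : |z.im| ≤ 1) : (2.9093:ℝ) ≤ ‖z‖ := by
  have h1 := low_R2 hz h
  have hs := sqrt3_lb
  have := norm_nonneg z
  nlinarith

lemma dv_low {z : ℂ} (hz : OM z) (h : |z.im| ≤ 1) : dv z ≤ 0.355 := by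
  have hR := R_lb_low hz h
  have hinv : (‖z‖)⁻¹ ≤ 0.3438 := by
    rw [inv_le_comm₀ (by linarith) (by norm_num)]
    calc (0.3438:ℝ)⁻¹ ≤ 2.9093 := by norm_num
      _ ≤ ‖z‖ := hR
  have hmem := inv_R_mem hz
  unfold dv
  have hy : (0.355:ℝ) ∈ Set.Icc (-(π/2)) (π/2) := by
    constructor <;> nlinarith [Real.pi_gt_d6]
  rw [Real.arcsin_le_iff_le_sin hmem hy]
  linarith [s355]

lemma dv_le_62 {z : ℂ} (hz : OM z) : dv z ≤ 0.62 := by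
  have hinv := inv_R_le hz
  have hs := sqrt3_lb
  have h1 : (‖z‖)⁻¹ ≤ 0.5774 := by
    have : (1:ℝ)/Real.sqrt 3 ≤ 0.5774 := by
      rw [div_le_iff₀ (by linarith)]
      nlinarith
    linarith
  have hmem := inv_R_mem hz
  unfold dv
  have hy : (0.62:ℝ) ∈ Set.Icc (-(π/2)) (π/2) := by
    constructor <;> nlinarith [Real.pi_gt_d6]
  rw [Real.arcsin_le_iff_le_sin hmem hy]
  linarith [s062]

lemma round_pi (x : ℝ) : |x - ((round (x/π) : ℤ):ℝ)*π| ≤ π/2 := by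
  have hπ := Real.pi_pos
  have h1 := abs_sub_round (x/π)
  have h2 : x - ((round (x/π) : ℤ):ℝ)*π = (x/π - round (x/π)) * π := by
    rw [sub_mul, div_mul_cancel₀ _ (ne_of_gt hπ)]
  rw [h2, abs_mul, abs_of_pos hπ]
  calc |x/π - ↑(round (x/π))| * π ≤ (1/2) * π :=
        mul_le_mul_of_nonneg_right h1 hπ.le
    _ = π/2 := by ring

/-- a point whose zone is wide is nearly vertical. -/
lemma vert_bound {z : ℂ} (hz : OM z) (hdv : 0.5957 ≤ dv z) :
    ∃ k : ℤ, |Complex.arg z - π/2 - (k:ℝ)*π| ≤ 0.0555 := by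
  have hπ := Real.pi_pos
  have hR0 := R_pos hz
  have hs3 := sqrt3_lb
  have hR3 := R_ge hz
  have hsin : (0.5598:ℝ) ≤ (‖z‖)⁻¹ := by
    rw [← sin_dv hz]
    calc (0.5598:ℝ) ≤ Real.sin 0.5957 := s5957
      _ ≤ Real.sin (dv z) := by
          apply Real.strictMonoOn_sin.monotoneOn
            (Set.mem_Icc.2 ⟨by nlinarith [Real.pi_gt_d6],
              by nlinarith [Real.pi_gt_d6]⟩)
            (Set.mem_Icc.2 ⟨Real.neg_pi_div_two_le_arcsin _,
              (Real.arcsin_le_pi_div_two _)⟩) hdv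
  have hRub : ‖z‖ ≤ 1.786353 := by
    have h2 : ‖z‖ ≤ (0.5598:ℝ)⁻¹ :=
      (le_inv_comm₀ (by norm_num) hR0).1 hsin
    calc ‖z‖ ≤ (0.5598:ℝ)⁻¹ := h2
      _ ≤ 1.786353 := by norm_num
  have hre : |z.re| ≤ 0.09553 := by
    have h1 : 3 + 2*|z.re| ≤ (‖z‖)^2 := by
      rw [Complex.sq_norm]; exact hz
    nlinarith
  have hcos : |Real.cos (Complex.arg z)| ≤ 0.055155 := by
    have hz0 : z ≠ 0 := by
      intro h; rw [h] at hR0; simp at hR0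
    rw [Complex.cos_arg hz0, abs_div,
      abs_of_nonneg (show (0:ℝ) ≤ ‖z‖ from hR0.le)]
    calc |z.re| / ‖z‖ ≤ 0.09553 / 1.7320508 :=
          div_le_div₀ (by norm_num) hre (by norm_num) (by linarith)
      _ ≤ 0.055155 := by norm_num
  refine ⟨round ((Complex.arg z - π/2)/π), ?_⟩
  have hround := round_pi (Complex.arg z - π/2)
  obtain ⟨β, hβ⟩ : ∃ b : ℝ, b = Complex.arg z - π/2 - (round ((Complex.arg z - π/2)/π):ℝ)*π :=
    ⟨_, rfl⟩
  rw [← hβ] at hround ⊢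
  have hsinβ : |Real.sin β| ≤ 0.055155 := by
    have h1 : |Real.sin β| = |Real.sin (Complex.arg z - π/2)| := by
      rw [show Complex.arg z - π/2 = β + ((round ((Complex.arg z - π/2)/π) : ℤ):ℝ)*π by
        rw [hβ]; ring]
      rw [abs_sin_int_pi]
    have h2 : Real.sin (Complex.arg z - π/2) = -Real.cos (Complex.arg z) := by
      rw [show Complex.arg z - π/2 = -(π/2 - Complex.arg z) by ring, Real.sin_neg,
        Real.sin_pi_div_two_sub]
    rw [h1, h2, abs_neg]
    exact hcos
  by_contra hc
  push_neg at hc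
  have h3 : Real.sin 0.0555 ≤ Real.sin |β| := by
    apply Real.strictMonoOn_sin.monotoneOn
      (Set.mem_Icc.2 ⟨by nlinarith [Real.pi_gt_d6], by nlinarith [Real.pi_gt_d6]⟩)
      (Set.mem_Icc.2 ⟨by linarith [abs_nonneg β], hround⟩) hc.le
  rw [← abs_sin_eq (by linarith [hround])] at h3
  linarith [s0555]


lemma vert_out {z : ℂ} (hz : OM z) (hdv : 0.5957 ≤ dv z) : 1 < |sf z 0.8| := by
  have hπl := Real.pi_gt_d6
  have hπu := Real.pi_lt_d6
  have hs3 := sqrt3_lb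
  have hR3 := R_ge hz
  obtain ⟨k, hk⟩ := vert_bound hz hdv
  obtain ⟨y, hy⟩ : ∃ y : ℝ, y = Complex.arg z - 0.8 - (k:ℝ)*π := ⟨_, rfl⟩
  have hβ := abs_le.1 hk
  have hylo : 0.7152 < y := by rw [hy]; linarith [hβ.1]
  have hyhi : y ≤ π/2 := by rw [hy]; linarith [hβ.2]
  have h1 : |sf z 0.8| = ‖z‖ * |Real.sin y| := by
    rw [abs_sf, show Complex.arg z - 0.8 = y + (k:ℝ)*π by rw [hy]; ring, abs_sin_int_pi]
  have h2 : Real.sin 0.7152 ≤ Real.sin y :=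
    Real.strictMonoOn_sin.monotoneOn
      (Set.mem_Icc.2 ⟨by linarith, by linarith⟩)
      (Set.mem_Icc.2 ⟨by linarith, hyhi⟩) hylo.le
  have h3 : (0.6534:ℝ) ≤ |Real.sin y| :=
    le_trans (le_trans s7152 h2) (le_abs_self _)
  rw [h1]
  nlinarith [abs_nonneg (Real.sin y)]

lemma low_out {z : ℂ} (hz : OM z) (hlow : |z.im| ≤ 1) : 1 < |sf z 0.8| := by
  have hπl := Real.pi_gt_d6
  have hπu := Real.pi_lt_d6
  have hR := R_lb_low hz hlow
  have hR0 := R_pos hz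
  have hsin : |Real.sin (Complex.arg z)| ≤ 0.34373 := by
    rw [Complex.sin_arg, abs_div,
      abs_of_nonneg (show (0:ℝ) ≤ ‖z‖ from hR0.le)]
    calc |z.im| / ‖z‖ ≤ 1 / 2.9093 :=
          div_le_div₀ (by norm_num) hlow (by norm_num) hR
      _ ≤ 0.34373 := by norm_num
  obtain ⟨β, hβdef⟩ : ∃ b : ℝ, b = Complex.arg z - (round (Complex.arg z/π):ℝ)*π := ⟨_, rfl⟩
  have hround : |β| ≤ π/2 := by rw [hβdef]; exact round_pi _
  have hsinβ : |Real.sin β| ≤ 0.34373 := by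
    rw [show β = Complex.arg z + (-(round (Complex.arg z/π)) : ℤ)*π by
      rw [hβdef]; push_cast; ring]
    rw [show Complex.arg z + (-(round (Complex.arg z/π)) : ℤ)*π
      = (Complex.arg z : ℝ) + ((-(round (Complex.arg z/π)) : ℤ):ℝ)*π by push_cast; ring]
    rw [abs_sin_int_pi]
    exact hsin
  have hβb : |β| ≤ 0.355 := by
    by_contra hc
    push_neg at hc
    have h3 : Real.sin 0.355 ≤ Real.sin |β| :=
      Real.strictMonoOn_sin.monotoneOn
        (Set.mem_Icc.2 ⟨by linarith, by linarith⟩)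
        (Set.mem_Icc.2 ⟨by linarith [abs_nonneg β], hround⟩) hc.le
    rw [← abs_sin_eq (by linarith)] at h3
    linarith [s355]
  have hβ' := abs_le.1 hβb
  obtain ⟨y, hy⟩ : ∃ y : ℝ, y = β - 0.8 := ⟨_, rfl⟩
  have hylo : 0.445 ≤ -y := by rw [hy]; linarith
  have hyhi : -y ≤ 1.155 := by rw [hy]; linarith
  have h1 : |sf z 0.8| = ‖z‖ * |Real.sin y| := by
    rw [abs_sf, show Complex.arg z - 0.8 = y + ((round (Complex.arg z/π) : ℤ):ℝ)*π by
      rw [hy, hβdef]; ring, abs_sin_int_pi]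
  have h2 : Real.sin 0.445 ≤ Real.sin (-y) :=
    Real.strictMonoOn_sin.monotoneOn
      (Set.mem_Icc.2 ⟨by linarith, by linarith⟩)
      (Set.mem_Icc.2 ⟨by linarith, by linarith⟩) hylo
  have h3 : (0.4286:ℝ) ≤ |Real.sin y| := by
    calc (0.4286:ℝ) ≤ Real.sin (-y) := le_trans s445 h2
      _ ≤ |Real.sin (-y)| := le_abs_self _
      _ = |Real.sin y| := by rw [Real.sin_neg, abs_neg]
  rw [h1]
  nlinarith [abs_nonneg (Real.sin y)]

lemma nocover {p q r : ℂ} (hp : OM p) (hq : OM q) (hr : OM r) :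
    ∃ θ : ℝ, 1 < |sf p θ| ∧ 1 < |sf q θ| ∧ 1 < |sf r θ| := by
  by_contra h
  push_neg at h
  have H : ∀ θ : ℝ, |sf p θ| ≤ 1 ∨ |sf q θ| ≤ 1 ∨ |sf r θ| ≤ 1 := by
    intro θ
    by_contra h2
    push_neg at h2
    exact absurd (h θ h2.1 h2.2.1) (not_le.2 h2.2.2)
  have hsum := measure_bound hp hq hr H
  have hπl := Real.pi_gt_d6
  have h62p := dv_le_62 hp; have h62q := dv_le_62 hq; have h62r := dv_le_62 hr
  have H8 := H 0.8
  rcases H 0 with h0 | h0 | h0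
  · rw [sf_zero] at h0
    have hA := low_out hp h0
    have hlow := dv_low hp h0
    have hB := vert_out hq (by nlinarith)
    have hC := vert_out hr (by nlinarith)
    rcases H8 with h8 | h8 | h8 <;> linarith
  · rw [sf_zero] at h0
    have hA := low_out hq h0
    have hlow := dv_low hq h0
    have hB := vert_out hp (by nlinarith)
    have hC := vert_out hr (by nlinarith)
    rcases H8 with h8 | h8 | h8 <;> linarith
  · rw [sf_zero] at h0
    have hA := low_out hr h0
    have hlow := dv_low hr h0
    have hB := vert_out hp (by nlinarith)
    have hC := vert_out hq (by nlinarith)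
    rcases H8 with h8 | h8 | h8 <;> linarith

end NoCover

end CNS

theorem cases_of_not_strip (E : Set ℂ) (hE : Distinguished E)
    (hstrip : ¬ SplittableByStrip E) :
    (∃ a : ℂ, ‖a‖ = 1 ∧ ∀ z ∈ E, z / a ∈ HalfStrip) ∨
    (∃ a : ℂ, ‖a‖ = 1 ∧ ∃ z₁ z₂ z₃ : ℂ, E = {z₁, z₂, z₃} ∧
      0 ≤ (z₁ / a).re ∧ (z₁ / a).im = 1 ∧
      z₂ / a ∈ HalfStrip ∧
      (z₃ / a).im < -1 ∧
      ApproxCollinear z₂ z₃) := by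
  obtain ⟨hcard, hΩ, _⟩ := hE
  obtain ⟨p, q, r, hpq, hpr, hqr, hEpqr⟩ := Set.ncard_eq_three.1 hcard
  have hOM : ∀ z ∈ E, CNS.OM z := by
    intro z hz
    have hz1 : z ∉ OmegaSet := by
      intro hmem
      have h0 : z ∈ E ∩ OmegaSet := ⟨hz, hmem⟩
      rw [hΩ] at h0
      exact absurd h0 (Set.notMem_empty z)
    simp only [OmegaSet, Set.mem_union, Set.mem_setOf_eq, not_or, not_lt] at hz1
    obtain ⟨ha, hb⟩ := hz1
    have e1 : Complex.normSq (z-1) = z.re*z.re + z.im*z.im - 2*z.re + 1 := by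
      simp [Complex.normSq_apply, Complex.sub_re, Complex.sub_im]; ring
    have e2 : Complex.normSq (z+1) = z.re*z.re + z.im*z.im + 2*z.re + 1 := by
      simp [Complex.normSq_apply, Complex.add_re, Complex.add_im]; ring
    have f1 : 4 ≤ Complex.normSq (z-1) := by
      nlinarith [Complex.sq_norm (z-1), norm_nonneg (z-1)]
    have f2 : 4 ≤ Complex.normSq (z+1) := by
      nlinarith [Complex.sq_norm (z+1), norm_nonneg (z+1)]
    show 3 + 2 * |z.re| ≤ Complex.normSq z
    rw [Complex.normSq_apply]
    rcases abs_cases z.re with ⟨h, _⟩ | ⟨h, _⟩ <;> rw [h] <;> nlinarith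
  have hOp : CNS.OM p := hOM p (by rw [hEpqr]; simp)
  have hOq : CNS.OM q := hOM q (by rw [hEpqr]; simp)
  have hOr : CNS.OM r := hOM r (by rw [hEpqr]; simp)
  obtain ⟨θ0, h1, h2, h3⟩ := CNS.nocover hOp hOq hOr
  exact CNS.afterOut hstrip p q r hEpqr hOp hOq hOr θ0 h1 h2 h3
end
end

section
/- Let e₁, e₂, e₃, e₄, e₅ be five distinct points in ℂ. Assume there exist disjoint closed discs F₁ = {u ∈ ℂ : |u − c₁| ≤ r₁} and F₂ = {u ∈ ℂ : |u − c₂| ≤ r₂} (c₁, c₂ ∈ ℂ, r₁, r₂ > 0) such that e₁, e₂ ∈ F₁, e₃, e₄ ∈ F₂, and e₅ does not belong to the convex hull of F₁ ∪ F₂. Then the six-element set {e₁, e₂, e₃, e₄, e₅, ∞} ⊆ ℂ ∪ {∞} is splittable. -/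
open OnePoint Set

noncomputable section

-- convexJoin of compact sets is compact
lemma isCompact_convexJoin {s t : Set ℂ} (hs : IsCompact s) (ht : IsCompact t) :
    IsCompact (convexJoin ℝ s t) := by
  have h : convexJoin ℝ s t =
      (fun p : ℝ × ℂ × ℂ => (1 - p.1) • p.2.1 + p.1 • p.2.2) ''
        (Icc (0:ℝ) 1 ×ˢ s ×ˢ t) := by
    ext z
    constructor
    · rintro hz
      rw [mem_convexJoin] at hz
      obtain ⟨x, hx, y, hy, hseg⟩ := hz
      rw [segment_eq_image] at hseg
      obtain ⟨θ, hθ, rfl⟩ := hseg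
      exact ⟨(θ, x, y), ⟨hθ, hx, hy⟩, rfl⟩
    · rintro ⟨⟨θ, x, y⟩, ⟨hθ, hx, hy⟩, rfl⟩
      rw [mem_convexJoin]
      exact ⟨x, hx, y, hy, by rw [segment_eq_image]; exact ⟨θ, hθ, rfl⟩⟩
  rw [h]
  exact ((isCompact_Icc.prod (hs.prod ht))).image (by fun_prop)

lemma clin_formula (f : ℂ →L[ℝ] ℝ) (z : ℂ) : f z = z.re * f 1 + z.im * f Complex.I := by
  have hz : z = z.re • (1:ℂ) + z.im • Complex.I := by
    simp [Complex.real_smul, Complex.re_add_im]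
  calc f z = f (z.re • (1:ℂ) + z.im • Complex.I) := by rw [← hz]
    _ = z.re * f 1 + z.im * f Complex.I := by
        rw [map_add, _root_.map_smul, _root_.map_smul]; simp


lemma ncard_le_four {α : Type*} (a b c d : α) : ({a, b, c, d} : Set α).ncard ≤ 4 := by
  have h1 := Set.ncard_insert_le a ({b, c, d} : Set α)
  have h2 := Set.ncard_insert_le b ({c, d} : Set α)
  have h3 := Set.ncard_insert_le c ({d} : Set α)
  simp only [Set.ncard_singleton] at *
  omega


theorem finishing_splitting (e₁ e₂ e₃ e₄ e₅ : ℂ)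
    (hdist : ({e₁, e₂, e₃, e₄, e₅} : Set ℂ).ncard = 5)
    (c₁ c₂ : ℂ) (r₁ r₂ : ℝ) (hr₁ : 0 < r₁) (hr₂ : 0 < r₂)
    (hdisj : Disjoint {u : ℂ | ‖u - c₁‖ ≤ r₁}
      {u : ℂ | ‖u - c₂‖ ≤ r₂})
    (he₁ : ‖e₁ - c₁‖ ≤ r₁) (he₂ : ‖e₂ - c₁‖ ≤ r₁)
    (he₃ : ‖e₃ - c₂‖ ≤ r₂) (he₄ : ‖e₄ - c₂‖ ≤ r₂)
    (he₅ : e₅ ∉ convexHull ℝ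
      ({u : ℂ | ‖u - c₁‖ ≤ r₁} ∪ {u : ℂ | ‖u - c₂‖ ≤ r₂})) :
    Splittable {((e₁ : OnePoint ℂ)), ((e₂ : OnePoint ℂ)), ((e₃ : OnePoint ℂ)),
      ((e₄ : OnePoint ℂ)), ((e₅ : OnePoint ℂ)), ∞} := by
  set B₁ : Set ℂ := {u : ℂ | ‖u - c₁‖ ≤ r₁} with hB₁
  set B₂ : Set ℂ := {u : ℂ | ‖u - c₂‖ ≤ r₂} with hB₂
  have hball₁ : B₁ = Metric.closedBall c₁ r₁ := by
    ext u; simp [hB₁, Metric.mem_closedBall, Complex.dist_eq]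
  have hball₂ : B₂ = Metric.closedBall c₂ r₂ := by
    ext u; simp [hB₂, Metric.mem_closedBall, Complex.dist_eq]
  set K : Set ℂ := convexHull ℝ (B₁ ∪ B₂) with hK
  have hKc : IsCompact K := by
    have h1 : Convex ℝ B₁ := by rw [hball₁]; exact convex_closedBall _ _
    have h2 : Convex ℝ B₂ := by rw [hball₂]; exact convex_closedBall _ _
    have hn1 : B₁.Nonempty := ⟨c₁, by simp [hB₁, hr₁.le]⟩
    have hn2 : B₂.Nonempty := ⟨c₂, by simp [hB₂, hr₂.le]⟩
    rw [hK, h1.convexHull_union h2 hn1 hn2]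
    exact isCompact_convexJoin (hball₁ ▸ isCompact_closedBall c₁ r₁)
      (hball₂ ▸ isCompact_closedBall c₂ r₂)
  have hB₁K : B₁ ⊆ K := (subset_union_left).trans (subset_convexHull ℝ _)
  have hB₂K : B₂ ⊆ K := (subset_union_right).trans (subset_convexHull ℝ _)
  obtain ⟨f, u, hfu, hb⟩ :=
    geometric_hahn_banach_point_closed (convex_convexHull ℝ _) hKc.isClosed he₅
  set a : ℂ := -Complex.ofReal (f 1) - Complex.ofReal (f Complex.I) * Complex.I with ha
  have hare : a.re = -(f 1) := by simp [ha]
  have haim : a.im = -(f Complex.I) := by simp [ha]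
  have key : ∀ z : ℂ, (z * (starRingEnd ℂ) a).re = -(f z) := by
    intro z
    rw [clin_formula f z]
    simp [Complex.mul_re, Complex.conj_re, Complex.conj_im, hare, haim]
    ring
  have hane : a ≠ 0 := by
    intro h0
    have h1 : (0 : ℂ) ∈ B₁ ∨ True := Or.inr trivial
    have he1K : e₁ ∈ K := hB₁K he₁
    have h2 := hb e₁ he1K
    have h3 : f e₁ = 0 := by
      rw [clin_formula f e₁]
      have : f 1 = 0 := by have := congrArg Complex.re h0; simpa [hare] using this
      have h4 : f Complex.I = 0 := by have := congrArg Complex.im h0; simpa [haim] using this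
      simp [this, h4]
    have h5 : f e₅ = 0 := by
      rw [clin_formula f e₅]
      have : f 1 = 0 := by have := congrArg Complex.re h0; simpa [hare] using this
      have h4 : f Complex.I = 0 := by have := congrArg Complex.im h0; simpa [haim] using this
      simp [this, h4]
    rw [h3] at h2; rw [h5] at hfu; linarith
  set H : Set ℂ := {z | -u ≤ (z * (starRingEnd ℂ) a).re} with hH
  have he₅H : e₅ ∈ H := by simp only [hH, mem_setOf_eq, key]; linarith
  have hKH : ∀ z ∈ K, z ∉ H := by
    intro z hz hzH
    rw [hH, mem_setOf_eq, key] at hzH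
    have := hb z hz
    linarith
  -- distinctness
  have hne12 : e₁ ≠ e₂ := by
    rintro rfl
    have hsub : ({e₁, e₁, e₃, e₄, e₅} : Set ℂ) = {e₁, e₃, e₄, e₅} := by
      ext x; simp
    rw [hsub] at hdist
    have := ncard_le_four e₁ e₃ e₄ e₅; omega
  have hne34 : e₃ ≠ e₄ := by
    rintro rfl
    have hsub : ({e₁, e₂, e₃, e₃, e₅} : Set ℂ) = {e₁, e₂, e₃, e₅} := by
      ext x; simp
    rw [hsub] at hdist
    have := ncard_le_four e₁ e₂ e₃ e₅; omega
  -- membership facts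
  have h3B₁ : e₃ ∉ B₁ := fun h => (Set.disjoint_left.mp hdisj h) he₃
  have h4B₁ : e₄ ∉ B₁ := fun h => (Set.disjoint_left.mp hdisj h) he₄
  have h1B₂ : e₁ ∉ B₂ := fun h => (Set.disjoint_left.mp hdisj he₁) h
  have h2B₂ : e₂ ∉ B₂ := fun h => (Set.disjoint_left.mp hdisj he₂) h
  have h5B₁ : e₅ ∉ B₁ := fun h => he₅ (hB₁K h)
  have h5B₂ : e₅ ∉ B₂ := fun h => he₅ (hB₂K h)
  have h1H : e₁ ∉ H := hKH e₁ (hB₁K he₁)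
  have h2H : e₂ ∉ H := hKH e₂ (hB₁K he₂)
  have h3H : e₃ ∉ H := hKH e₃ (hB₂K he₃)
  have h4H : e₄ ∉ H := hKH e₄ (hB₂K he₄)
  refine ⟨(fun z : ℂ => (z : OnePoint ℂ)) '' B₁, (fun z : ℂ => (z : OnePoint ℂ)) '' B₂,
    {∞} ∪ (fun z : ℂ => (z : OnePoint ℂ)) '' H, Or.inl ⟨c₁, r₁, hr₁, rfl⟩,
    Or.inl ⟨c₂, r₂, hr₂, rfl⟩, Or.inr (Or.inr ⟨a, hane, -u, rfl⟩), ?_, ?_, ?_, ?_, ?_, ?_⟩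
  · rw [Set.disjoint_left]
    rintro x ⟨z, hz, rfl⟩ ⟨w, hw, hwz⟩
    rw [OnePoint.coe_eq_coe] at hwz
    subst hwz
    exact (Set.disjoint_left.mp hdisj hz) hw
  · rw [Set.disjoint_left]
    rintro x ⟨z, hz, rfl⟩ (hx | ⟨w, hw, hwz⟩)
    · exact OnePoint.coe_ne_infty z (Set.mem_singleton_iff.mp hx ▸ rfl)
    · rw [OnePoint.coe_eq_coe] at hwz
      subst hwz
      exact hKH w (hB₁K hz) hw
  · rw [Set.disjoint_left]
    rintro x ⟨z, hz, rfl⟩ (hx | ⟨w, hw, hwz⟩)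
    · exact OnePoint.coe_ne_infty z (Set.mem_singleton_iff.mp hx ▸ rfl)
    · rw [OnePoint.coe_eq_coe] at hwz
      subst hwz
      exact hKH w (hB₂K hz) hw
  · have : (fun z : ℂ => (z : OnePoint ℂ)) '' B₁ ∩
        {((e₁ : OnePoint ℂ)), ((e₂ : OnePoint ℂ)), ((e₃ : OnePoint ℂ)),
          ((e₄ : OnePoint ℂ)), ((e₅ : OnePoint ℂ)), ∞} =
        {((e₁ : OnePoint ℂ)), ((e₂ : OnePoint ℂ))} := by
      ext x
      simp only [Set.mem_inter_iff, Set.mem_insert_iff, Set.mem_singleton_iff]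
      constructor
      · rintro ⟨⟨z, hz, rfl⟩, h | h | h | h | h | h⟩ <;>
          first
          | (left; exact h)
          | (right; exact h)
          | (rw [OnePoint.coe_eq_coe] at h; subst h; first
              | exact absurd hz h3B₁ | exact absurd hz h4B₁ | exact absurd hz h5B₁)
          | exact absurd h (OnePoint.coe_ne_infty z)
      · rintro (rfl | rfl)
        · exact ⟨⟨e₁, he₁, rfl⟩, by tauto⟩
        · exact ⟨⟨e₂, he₂, rfl⟩, by tauto⟩
    rw [this]
    exact Set.ncard_pair (fun h => hne12 (OnePoint.coe_eq_coe.mp h))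
  · have : (fun z : ℂ => (z : OnePoint ℂ)) '' B₂ ∩
        {((e₁ : OnePoint ℂ)), ((e₂ : OnePoint ℂ)), ((e₃ : OnePoint ℂ)),
          ((e₄ : OnePoint ℂ)), ((e₅ : OnePoint ℂ)), ∞} =
        {((e₃ : OnePoint ℂ)), ((e₄ : OnePoint ℂ))} := by
      ext x
      simp only [Set.mem_inter_iff, Set.mem_insert_iff, Set.mem_singleton_iff]
      constructor
      · rintro ⟨⟨z, hz, rfl⟩, h | h | h | h | h | h⟩ <;>
          first
          | (left; exact h)
          | (right; exact h)
          | (rw [OnePoint.coe_eq_coe] at h; subst h; first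
              | exact absurd hz h1B₂ | exact absurd hz h2B₂ | exact absurd hz h5B₂)
          | exact absurd h (OnePoint.coe_ne_infty z)
      · rintro (rfl | rfl)
        · exact ⟨⟨e₃, he₃, rfl⟩, by tauto⟩
        · exact ⟨⟨e₄, he₄, rfl⟩, by tauto⟩
    rw [this]
    exact Set.ncard_pair (fun h => hne34 (OnePoint.coe_eq_coe.mp h))
  · have : ({∞} ∪ (fun z : ℂ => (z : OnePoint ℂ)) '' H) ∩
        {((e₁ : OnePoint ℂ)), ((e₂ : OnePoint ℂ)), ((e₃ : OnePoint ℂ)),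
          ((e₄ : OnePoint ℂ)), ((e₅ : OnePoint ℂ)), ∞} =
        {((e₅ : OnePoint ℂ)), ∞} := by
      ext x
      simp only [Set.mem_inter_iff, Set.mem_union, Set.mem_insert_iff, Set.mem_singleton_iff]
      constructor
      · rintro ⟨hx | ⟨z, hz, rfl⟩, h | h | h | h | h | h⟩ <;>
          first
          | (right; exact hx)
          | (left; exact h)
          | (right; exact h)
          | (rw [OnePoint.coe_eq_coe] at h; subst h; first
              | exact absurd hz h1H | exact absurd hz h2H
              | exact absurd hz h3H | exact absurd hz h4H)
          | exact absurd h (OnePoint.coe_ne_infty z)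
      · rintro (rfl | rfl)
        · exact ⟨Or.inr ⟨e₅, he₅H, rfl⟩, by tauto⟩
        · exact ⟨Or.inl rfl, by tauto⟩
    rw [this]
    exact Set.ncard_pair (OnePoint.coe_ne_infty e₅)
end
end

section
/- Let z₁, z₂ ∈ ℂ satisfy Im(z₁) ≥ 1 and Im(z₂) ≤ −1, and assume that max(|Im(z₁)|, |Im(z₂)|) > 1. Then z₁ and z₂ are not approximately collinear. -/
open OnePoint Set

noncomputable section

theorem not_approxCollinear_of_opposite (z₁ z₂ : ℂ)
    (h₁ : 1 ≤ z₁.im) (h₂ : z₂.im ≤ -1)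
    (hmax : 1 < max |z₁.im| |z₂.im|) :
    ¬ ApproxCollinear z₁ z₂ := by
  rintro ⟨a, ha, ⟨hu₁, hv₁⟩, ⟨hu₂, hv₂⟩⟩
  have ha0 : a ≠ 0 := by
    intro h; rw [h] at ha; simp at ha
  have hz1 : z₁ = a * (z₁ / a) := (mul_div_cancel₀ _ ha0).symm
  have hz2 : z₂ = a * (z₂ / a) := (mul_div_cancel₀ _ ha0).symm
  set p := a.re with hp
  set q := a.im with hq
  set u₁ := (z₁ / a).re
  set v₁ := (z₁ / a).im
  set u₂ := (z₂ / a).re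
  set v₂ := (z₂ / a).im
  have hpq : p ^ 2 + q ^ 2 = 1 := by
    have := Complex.sq_norm a
    rw [ha, Complex.normSq_apply] at this
    nlinarith [this]
  have hy1 : z₁.im = p * v₁ + q * u₁ := by
    conv_lhs => rw [hz1]
    rw [Complex.mul_im]
  have hy2 : z₂.im = p * v₂ + q * u₂ := by
    conv_lhs => rw [hz2]
    rw [Complex.mul_im]
  obtain ⟨hv₁l, hv₁r⟩ := abs_le.mp hv₁
  obtain ⟨hv₂l, hv₂r⟩ := abs_le.mp hv₂
  rw [hy1] at h₁; rw [hy2] at h₂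
  rw [hy1, hy2] at hmax
  clear_value p q u₁ v₁ u₂ v₂
  clear hz1 hz2 ha ha0 hv₁ hv₂ hp hq hy1 hy2
  have hw1 : (0:ℝ) ≤ 1 - v₁ ^ 2 := by nlinarith
  have hw2 : (0:ℝ) ≤ 1 - v₂ ^ 2 := by nlinarith
  rcases lt_trichotomy q 0 with hq0 | hq0 | hq0
  · -- q < 0 : contradiction from z₁
    nlinarith [mul_nonneg hu₁ (neg_nonneg.mpr hq0.le), sq_nonneg (p * v₁ - 1),
      mul_nonneg hw1 (sq_nonneg p), mul_pos (neg_pos.mpr hq0) (neg_pos.mpr hq0)]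
  · -- q = 0 : both imaginary parts have absolute value ≤ 1
    have hp2 : p ^ 2 = 1 := by nlinarith
    have h1' : |p * v₁ + q * u₁| ≤ 1 := by
      rw [hq0]
      rw [abs_le]
      constructor <;> nlinarith [sq_nonneg (p - 1), sq_nonneg (p + 1)]
    have h2' : |p * v₂ + q * u₂| ≤ 1 := by
      rw [hq0]
      rw [abs_le]
      constructor <;> nlinarith [sq_nonneg (p - 1), sq_nonneg (p + 1)]
    rcases lt_max_iff.mp hmax with h | h
    · exact absurd h1' (not_le.mpr h)
    · exact absurd h2' (not_le.mpr h)
  · -- q > 0 : contradiction from z₂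
    nlinarith [mul_nonneg hu₂ hq0.le, sq_nonneg (p * v₂ + 1),
      mul_nonneg hw2 (sq_nonneg p), mul_pos hq0 hq0]
end
end

section
/- Let z₁, z₂, z₃ ∈ ℂ with |z₁ − z₂| ≥ 2 and |z₃| ≥ max(|z₁|, |z₂|). If z₃ ∉ F(z₁, z₂), then z₃ does not belong to the convex hull of F(z₁, z₂) ∪ {u ∈ ℂ : |u| ≤ 1}. -/
open OnePoint Set

noncomputable section

theorem biggest_not_in_convexHull (z₁ z₂ z₃ : ℂ)
    (hdist : 2 ≤ ‖z₁ - z₂‖)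
    (hbig : max (‖z₁‖) (‖z₂‖) ≤ ‖z₃‖)
    (hnot : z₃ ∉ DiamDisc z₁ z₂) :
    z₃ ∉ convexHull ℝ (DiamDisc z₁ z₂ ∪ {u : ℂ | ‖u‖ ≤ 1}) := by
  intro hmem
  set c : ℂ := (z₁ + z₂) / 2 with hc
  set a : ℂ := z₃ - c with ha
  set r : ℝ := ‖z₁ - z₂‖ / 2 with hr
  set d : ℝ := ‖a‖ with hd
  have hr1 : 1 ≤ r := by simp only [hr]; linarith
  have hdr : r < d := by
    simp only [DiamDisc, Set.mem_setOf_eq, not_le] at hnot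
    exact hnot
  have hd0 : 0 < d := lt_of_le_of_lt (by linarith) hdr
  set f : ℂ → ℝ := fun u => ((starRingEnd ℂ) a * u).re with hf
  have hlin : IsLinearMap ℝ f := by
    constructor
    · intro u v; simp only [hf, mul_add, Complex.add_re]
    · intro t u
      simp only [hf, Complex.real_smul, smul_eq_mul]
      rw [show (starRingEnd ℂ) a * ((t : ℂ) * u) = (t : ℂ) * ((starRingEnd ℂ) a * u) by ring]
      simp
  set s : ℝ := max d (f c + d * r) with hs
  have hub : ∀ u ∈ DiamDisc z₁ z₂ ∪ {u : ℂ | ‖u‖ ≤ 1}, f u ≤ s := by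
    rintro u (hu | hu)
    · refine le_trans ?_ (le_max_right _ _)
      simp only [DiamDisc, Set.mem_setOf_eq] at hu
      have : f u = f c + ((starRingEnd ℂ) a * (u - c)).re := by
        simp only [hf]; rw [← Complex.add_re]; ring_nf
      rw [this]
      have h1 : ((starRingEnd ℂ) a * (u - c)).re ≤ ‖(starRingEnd ℂ) a * (u - c)‖ :=
        Complex.re_le_norm _
      have h2 : ‖(starRingEnd ℂ) a * (u - c)‖ = d * ‖u - c‖ := by
        rw [norm_mul, Complex.norm_conj]
      have h3 : d * ‖u - c‖ ≤ d * r :=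
        mul_le_mul_of_nonneg_left hu hd0.le
      linarith
    · refine le_trans ?_ (le_max_left _ _)
      simp only [Set.mem_setOf_eq] at hu
      calc f u ≤ ‖(starRingEnd ℂ) a * u‖ := Complex.re_le_norm _
        _ = d * ‖u‖ := by rw [norm_mul, Complex.norm_conj]
        _ ≤ d * 1 := mul_le_mul_of_nonneg_left hu hd0.le
        _ = d := mul_one d
  have hsep : f z₃ ≤ s := convexHull_min hub (convex_halfSpace_le hlin s) hmem
  -- now show f z₃ > s
  have hfz : f z₃ = f c + d ^ 2 := by
    have e : (starRingEnd ℂ) a * z₃ = (starRingEnd ℂ) a * c + (starRingEnd ℂ) a * a := by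
      rw [ha]; ring
    simp only [hf, e, Complex.add_re, Complex.conj_mul']
    simp only [hd, ← Complex.ofReal_pow, Complex.ofReal_re]
  have hN1 : Complex.normSq c + r ^ 2 = (Complex.normSq z₁ + Complex.normSq z₂) / 2 := by
    have e1 : Complex.normSq c = Complex.normSq (z₁ + z₂) / 4 := by
      rw [hc, Complex.normSq_div]; norm_num [Complex.normSq_apply]
    have e2 : r ^ 2 = Complex.normSq (z₁ - z₂) / 4 := by
      rw [hr, div_pow, ← Complex.sq_norm]; norm_num
    rw [e1, e2]
    simp only [Complex.normSq_apply, Complex.add_re, Complex.add_im, Complex.sub_re,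
      Complex.sub_im]
    ring
  have hN3 : Complex.normSq z₁ ≤ Complex.normSq z₃ ∧ Complex.normSq z₂ ≤ Complex.normSq z₃ := by
    constructor <;>
    · rw [← Complex.sq_norm, ← Complex.sq_norm]
      apply pow_le_pow_left₀ (norm_nonneg _)
      · exact le_trans (by simp) hbig
      -- maybe extra arg
  have hfc : f c = (((starRingEnd ℂ) z₃) * c).re - Complex.normSq c := by
    simp only [hf, ha, map_sub, sub_mul, Complex.sub_re]
    rw [Complex.conj_mul']
    simp only [← Complex.ofReal_pow, Complex.ofReal_re, Complex.sq_norm]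
  have hd2 : d ^ 2 = Complex.normSq z₃ - 2 * (((starRingEnd ℂ) z₃) * c).re + Complex.normSq c := by
    rw [hd, Complex.sq_norm, ha, Complex.normSq_sub]
    rw [show (z₃ * (starRingEnd ℂ) c).re = (((starRingEnd ℂ) z₃) * c).re by
      rw [← Complex.conj_re, map_mul]; simp [mul_comm]]
    ring
  have hfinal : s < f z₃ := by
    rw [hfz, hs]
    apply max_lt
    · nlinarith [hN3.1, hN3.2, sq_nonneg (d - r), sq_nonneg (d - 1)]
    · nlinarith
  linarith
end
end

section
/- Let z₁, z₂ ∈ Σ with |z₁ − z₂| ≥ 2. Then Re(z₁) ≤ Re(z₂) if and only if |z₁| ≤ |z₂|. -/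
open OnePoint Set

noncomputable section

theorem comparison_in_strip (z₁ z₂ : ℂ) (h₁ : z₁ ∈ HalfStrip) (h₂ : z₂ ∈ HalfStrip)
    (hdist : 2 ≤ ‖z₁ - z₂‖) :
    z₁.re ≤ z₂.re ↔ ‖z₁‖ ≤ ‖z₂‖ := by
  obtain ⟨ha₁, hb₁⟩ := h₁
  obtain ⟨ha₂, hb₂⟩ := h₂
  rw [abs_le] at hb₁ hb₂
  have hd : 4 ≤ (z₁.re - z₂.re)^2 + (z₁.im - z₂.im)^2 := by
    have h4 : (2:ℝ)^2 ≤ ‖z₁ - z₂‖^2 :=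
      pow_le_pow_left₀ (by norm_num) hdist 2
    rw [Complex.sq_norm, Complex.normSq_apply] at h4
    simp only [Complex.sub_re, Complex.sub_im] at h4
    nlinarith [h4]
  have key : ‖z₁‖ ≤ ‖z₂‖ ↔
      z₁.re * z₁.re + z₁.im * z₁.im ≤ z₂.re * z₂.re + z₂.im * z₂.im := by
    rw [← pow_le_pow_iff_left₀ (norm_nonneg z₁) (norm_nonneg z₂) two_ne_zero,
        Complex.sq_norm, Complex.sq_norm, Complex.normSq_apply, Complex.normSq_apply]
  rw [key]
  constructor
  · intro h
    nlinarith [sq_nonneg (z₁.im - z₂.im), sq_nonneg (z₁.im + z₂.im),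
      sq_nonneg (z₂.re - z₁.re - 2), mul_nonneg ha₁ ha₂,
      mul_nonneg (sub_nonneg.2 h) ha₁, mul_nonneg (sub_nonneg.2 h) ha₂]
  · intro h
    by_contra hlt
    push_neg at hlt
    have : z₂.re * z₂.re + z₂.im * z₂.im < z₁.re * z₁.re + z₁.im * z₁.im := by
      nlinarith [sq_nonneg (z₁.im - z₂.im), sq_nonneg (z₁.im + z₂.im),
        sq_nonneg (z₁.re - z₂.re - 2), mul_nonneg ha₁ ha₂,
        mul_pos (sub_pos.2 hlt) (sub_pos.2 hlt),
        mul_nonneg (sub_nonneg.2 hlt.le) ha₁, mul_nonneg (sub_nonneg.2 hlt.le) ha₂]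
    linarith
end
end

section
/- Let z₁, z₂ ∈ ℂ be approximately collinear with |z₁| > 1 and |z₂| > 1. Then there exists b ∈ ℂ with |b| = 1 such that z₁/b ∈ Σ, z₂/b ∈ Σ, and Im(z₁/b) = −Im(z₂/b). -/
set_option maxHeartbeats 1000000

open OnePoint Set

noncomputable section

theorem equal_imag_parts_in_strip (z₁ z₂ : ℂ) (h : ApproxCollinear z₁ z₂)
    (h₁ : 1 < ‖z₁‖) (h₂ : 1 < ‖z₂‖) :
    ∃ b : ℂ, ‖b‖ = 1 ∧ z₁ / b ∈ HalfStrip ∧ z₂ / b ∈ HalfStrip ∧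
      (z₁ / b).im = -(z₂ / b).im := by
  obtain ⟨a, ha, hz₁, hz₂⟩ := h
  have ha0 : a ≠ 0 := by intro h0; simp [h0] at ha
  set w₁ := z₁ / a with hw₁
  set w₂ := z₂ / a with hw₂
  obtain ⟨hre₁, him₁⟩ := hz₁
  obtain ⟨hre₂, him₂⟩ := hz₂
  have habs₁ : 1 < ‖w₁‖ := by rw [hw₁, norm_div, ha, div_one]; exact h₁
  have habs₂ : 1 < ‖w₂‖ := by rw [hw₂, norm_div, ha, div_one]; exact h₂
  have hsq₁ : 1 < w₁.re ^ 2 + w₁.im ^ 2 := by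
    have h' := Complex.sq_norm w₁
    rw [Complex.normSq_apply] at h'
    nlinarith
  have hsq₂ : 1 < w₂.re ^ 2 + w₂.im ^ 2 := by
    have h' := Complex.sq_norm w₂
    rw [Complex.normSq_apply] at h'
    nlinarith
  obtain ⟨hy₁l, hy₁u⟩ := abs_le.mp him₁
  obtain ⟨hy₂l, hy₂u⟩ := abs_le.mp him₂
  have hx₁ : 0 < w₁.re := by nlinarith
  have hx₂ : 0 < w₂.re := by nlinarith
  set s : ℂ := w₁ + w₂ with hs
  have hsre : s.re = w₁.re + w₂.re := by simp [hs]
  have hsim : s.im = w₁.im + w₂.im := by simp [hs]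
  have hs0 : s ≠ 0 := by
    intro h0
    have h0' : s.re = 0 := by rw [h0]; simp
    rw [hsre] at h0'
    nlinarith
  set r : ℝ := ‖s‖ with hr
  have hr0 : 0 < r := by rw [hr]; exact (norm_pos_iff.mpr hs0)
  have hrC : (r : ℂ) ≠ 0 := by exact_mod_cast hr0.ne'
  have hrsq : r ^ 2 = s.re ^ 2 + s.im ^ 2 := by
    rw [hr, Complex.sq_norm, Complex.normSq_apply]; ring
  have hsc : s * (starRingEnd ℂ) s = ((r : ℝ) : ℂ) ^ 2 := by
    rw [Complex.mul_conj]
    norm_cast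
    rw [hr]
    exact (Complex.sq_norm s).symm
  have hb0 : a * s / (r : ℂ) ≠ 0 := by
    apply div_ne_zero (mul_ne_zero ha0 hs0) hrC
  have hz₁' : z₁ = w₁ * a := by rw [hw₁]; field_simp
  have hz₂' : z₂ = w₂ * a := by rw [hw₂]; field_simp
  have habss : ‖s‖ = r := hr.symm
  clear_value r s w₁ w₂
  have hmul : ∀ w : ℂ, w * (starRingEnd ℂ) s / (r : ℂ) * (a * s / (r : ℂ)) = w * a := by
    intro w
    rw [div_mul_div_comm, ← Complex.ofReal_mul]
    rw [show w * (starRingEnd ℂ) s * (a * s) = w * a * (s * (starRingEnd ℂ) s) by ring, hsc]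
    rw [show ((r * r : ℝ) : ℂ) = ((r:ℂ))^2 by push_cast; ring]
    exact mul_div_cancel_right₀ _ (pow_ne_zero 2 hrC)
  have key₁ : z₁ / (a * s / (r : ℂ)) = w₁ * (starRingEnd ℂ) s / (r : ℂ) := by
    rw [hz₁', div_eq_iff hb0, hmul]
  have key₂ : z₂ / (a * s / (r : ℂ)) = w₂ * (starRingEnd ℂ) s / (r : ℂ) := by
    rw [hz₂', div_eq_iff hb0, hmul]
  have hre1 : (z₁ / (a * s / (r : ℂ))).re = (w₁.re * s.re + w₁.im * s.im) / r := by
    rw [key₁, Complex.div_ofReal_re, Complex.mul_re, Complex.conj_re, Complex.conj_im]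
    ring_nf
  have hre2 : (z₂ / (a * s / (r : ℂ))).re = (w₂.re * s.re + w₂.im * s.im) / r := by
    rw [key₂, Complex.div_ofReal_re, Complex.mul_re, Complex.conj_re, Complex.conj_im]
    ring_nf
  have him1 : (z₁ / (a * s / (r : ℂ))).im = (w₁.im * s.re - w₁.re * s.im) / r := by
    rw [key₁, Complex.div_ofReal_im, Complex.mul_im, Complex.conj_re, Complex.conj_im]
    ring_nf
  have him2 : (z₂ / (a * s / (r : ℂ))).im = (w₂.im * s.re - w₂.re * s.im) / r := by
    rw [key₂, Complex.div_ofReal_im, Complex.mul_im, Complex.conj_re, Complex.conj_im]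
    ring_nf
  have hyy : -1 ≤ w₁.im * w₂.im := by
    nlinarith [mul_nonneg (sub_nonneg.2 hy₁u) (sub_nonneg.2 hy₂u),
      mul_nonneg (by linarith : (0:ℝ) ≤ 1 + w₁.im) (by linarith : (0:ℝ) ≤ 1 + w₂.im)]
  have E1 : 0 ≤ w₁.re * s.re + w₁.im * s.im := by
    rw [hsre, hsim]
    nlinarith [mul_nonneg hx₁.le hx₂.le]
  have E2 : 0 ≤ w₂.re * s.re + w₂.im * s.im := by
    rw [hsre, hsim]
    nlinarith [mul_nonneg hx₁.le hx₂.le]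
  have hrx : s.re ≤ r := by nlinarith [sq_nonneg s.im]
  have F1 : |w₁.im * s.re - w₁.re * s.im| ≤ r := by
    rw [abs_le, hsre, hsim]
    constructor
    · nlinarith [mul_nonneg (by linarith : (0:ℝ) ≤ 1 + w₁.im) hx₂.le,
        mul_nonneg (by linarith : (0:ℝ) ≤ 1 - w₂.im) hx₁.le]
    · nlinarith [mul_nonneg (by linarith : (0:ℝ) ≤ 1 - w₁.im) hx₂.le,
        mul_nonneg (by linarith : (0:ℝ) ≤ 1 + w₂.im) hx₁.le]
  have F2 : |w₂.im * s.re - w₂.re * s.im| ≤ r := by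
    rw [abs_le, hsre, hsim]
    constructor
    · nlinarith [mul_nonneg (by linarith : (0:ℝ) ≤ 1 + w₂.im) hx₁.le,
        mul_nonneg (by linarith : (0:ℝ) ≤ 1 - w₁.im) hx₂.le]
    · nlinarith [mul_nonneg (by linarith : (0:ℝ) ≤ 1 - w₂.im) hx₁.le,
        mul_nonneg (by linarith : (0:ℝ) ≤ 1 + w₁.im) hx₂.le]
  refine ⟨a * s / (r : ℂ), ?_, ⟨?_, ?_⟩, ⟨?_, ?_⟩, ?_⟩
  · rw [norm_div, norm_mul, ha, one_mul, habss, Complex.norm_real, Real.norm_eq_abs, abs_of_pos hr0,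
      div_self hr0.ne']
  · rw [hre1]; exact div_nonneg E1 hr0.le
  · rw [him1, abs_div, abs_of_pos hr0, div_le_one hr0]; exact F1
  · rw [hre2]; exact div_nonneg E2 hr0.le
  · rw [him2, abs_div, abs_of_pos hr0, div_le_one hr0]; exact F2
  · rw [him1, him2, hsre, hsim]
    field_simp
    ring
end
end

section
/- Let z₁, z₂, z₃ ∈ Σ satisfy: (i) |z₃ − z₁| ≥ 2 and |z₃ − z₂| ≥ 2; (ii) Re(z₁) ≤ Re(z₂) ≤ Re(z₃), and if Re(z₂) = Re(z₃) then Im(z₃) ≠ Im(z₁). Then z₃ ∉ F(z₁, z₂). -/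
open OnePoint Set

noncomputable section

set_option maxHeartbeats 1600000 in
theorem not_in_diamDisc_same_strip (z₁ z₂ z₃ : ℂ)
    (h₁ : z₁ ∈ HalfStrip) (h₂ : z₂ ∈ HalfStrip) (h₃ : z₃ ∈ HalfStrip)
    (hd₁ : 2 ≤ ‖z₃ - z₁‖) (hd₂ : 2 ≤ ‖z₃ - z₂‖)
    (hre : z₁.re ≤ z₂.re ∧ z₂.re ≤ z₃.re)
    (hdeg : z₂.re = z₃.re → z₃.im ≠ z₁.im) :
    z₃ ∉ DiamDisc z₁ z₂ := by
  intro hmem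
  obtain ⟨hx1, hy1⟩ := h₁
  obtain ⟨hx2, hy2⟩ := h₂
  obtain ⟨hx3, hy3⟩ := h₃
  rw [abs_le] at hy1 hy2 hy3
  -- translate distance hypotheses to squares
  have sq1 : (4:ℝ) ≤ (z₃.re - z₁.re)^2 + (z₃.im - z₁.im)^2 := by
    have h := mul_self_le_mul_self (by norm_num : (0:ℝ) ≤ 2) hd₁
    have h' : (4:ℝ) ≤ Complex.normSq (z₃ - z₁) := by
      rw [← Complex.sq_norm]; nlinarith
    simp [Complex.normSq_apply, Complex.sub_re, Complex.sub_im] at h'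
    nlinarith [h']
  have sq2 : (4:ℝ) ≤ (z₃.re - z₂.re)^2 + (z₃.im - z₂.im)^2 := by
    have h := mul_self_le_mul_self (by norm_num : (0:ℝ) ≤ 2) hd₂
    have h' : (4:ℝ) ≤ Complex.normSq (z₃ - z₂) := by
      rw [← Complex.sq_norm]; nlinarith
    simp [Complex.normSq_apply, Complex.sub_re, Complex.sub_im] at h'
    nlinarith [h']
  -- translate membership to the dot-product inequality
  have hdot : (z₃.re - z₁.re) * (z₃.re - z₂.re) + (z₃.im - z₁.im) * (z₃.im - z₂.im) ≤ 0 := by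
    have h : ‖z₃ - (z₁ + z₂)/2‖ ≤ ‖z₁ - z₂‖ / 2 := hmem
    have h2 : ‖z₃ - (z₁ + z₂)/2‖ * ‖z₃ - (z₁ + z₂)/2‖ ≤
        (‖z₁ - z₂‖ / 2) * (‖z₁ - z₂‖ / 2) :=
      mul_self_le_mul_self (norm_nonneg _) h
    have e1 : ‖z₃ - (z₁ + z₂)/2‖ * ‖z₃ - (z₁ + z₂)/2‖
        = Complex.normSq (z₃ - (z₁ + z₂)/2) := (Complex.normSq_eq_norm_sq _).symm ▸ (sq _).symm
    have e2 : ‖z₁ - z₂‖ * ‖z₁ - z₂‖ = Complex.normSq (z₁ - z₂) := by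
      rw [Complex.normSq_eq_norm_sq, sq]
    rw [e1] at h2
    have h3 : Complex.normSq (z₃ - (z₁ + z₂)/2) ≤ Complex.normSq (z₁ - z₂) / 4 := by
      nlinarith [h2, e2]
    have hre2 : (z₃ - (z₁ + z₂)/2).re = z₃.re - (z₁.re + z₂.re)/2 := by
      simp [Complex.sub_re, Complex.add_re]
    have him2 : (z₃ - (z₁ + z₂)/2).im = z₃.im - (z₁.im + z₂.im)/2 := by
      simp [Complex.sub_im, Complex.add_im]
    simp only [Complex.normSq_apply, hre2, him2, Complex.sub_re, Complex.sub_im] at h3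
    nlinarith [h3]
  set A := z₃.re - z₁.re with hA
  set B := z₃.re - z₂.re with hB
  set S := z₃.im - z₁.im with hS
  set T := z₃.im - z₂.im with hT
  have hBnn : 0 ≤ B := by simp [hB]; linarith [hre.2]
  have hAB : B ≤ A := by simp [hA, hB]; linarith [hre.1]
  rcases eq_or_lt_of_le hBnn with hB0 | hBpos
  · -- z₂.re = z₃.re
    have hz : z₂.re = z₃.re := by rw [hB] at hB0; linarith
    have hne : z₃.im ≠ z₁.im := hdeg hz
    have hSne : S ≠ 0 := by rw [hS]; exact sub_ne_zero_of_ne hne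
    have hT2 : (4:ℝ) ≤ T^2 := by nlinarith [sq2, hB0]
    have hST0 : S * T ≤ 0 := by nlinarith [hdot, hB0]
    have hTcase : T = 2 ∨ T = -2 := by
      rcases le_or_gt 0 T with h | h
      · left; nlinarith [hy2.1, hy3.2, hT]
      · right; nlinarith [hy2.2, hy3.1, hT]
    rcases hTcase with ht | ht
    · have h3im : z₃.im = 1 := by rw [hT] at ht; linarith [hy2.1, hy3.2]
      have hSnn : 0 ≤ S := by rw [hS, h3im]; linarith [hy1.2]
      have hSpos : 0 < S := hSnn.lt_of_ne (Ne.symm hSne)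
      nlinarith [hSpos, hST0, ht]
    · have h3im : z₃.im = -1 := by rw [hT] at ht; linarith [hy2.2, hy3.1]
      have hSnp : S ≤ 0 := by rw [hS, h3im]; linarith [hy1.1]
      have hSneg : S < 0 := hSnp.lt_of_ne hSne
      nlinarith [hSneg, hST0, ht]
  · have hApos : 0 < A := lt_of_lt_of_le hBpos hAB
    have hS2 : S^2 ≤ 4 := by nlinarith [hy1.1, hy1.2, hy3.1, hy3.2]
    have hT2 : T^2 ≤ 4 := by nlinarith [hy2.1, hy2.2, hy3.1, hy3.2]
    have hA2 : 4 - S^2 ≤ A^2 := by nlinarith [sq1]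
    have hB2 : 4 - T^2 ≤ B^2 := by nlinarith [sq2]
    have hST : S - T = z₂.im - z₁.im := by rw [hS, hT]; ring
    have hSTle : (S - T)^2 ≤ 4 := by rw [hST]; nlinarith [hy1.1, hy1.2, hy2.1, hy2.2]
    have key : (4 - S^2) * (4 - T^2) ≤ A^2 * B^2 :=
      mul_le_mul hA2 hB2 (by linarith) (sq_nonneg A)
    nlinarith [key, hSTle, hdot, mul_pos hApos hBpos, sq_nonneg (A*B + S*T), sq_nonneg (A*B - S*T)]
end
end

section
/- Let z₁, z₂, z₃ ∈ ℂ satisfy: (i) |z₃| ≥ max(|z₁|, |z₂|); (ii) z₁ and z₂ are approximately collinear and min(|z₁|, |z₂|) > 1; (iii) there is no a ∈ ℂ with |a| = 1 such that |Im(z_j/a)| ≤ 1 for all j ∈ {1, 2, 3}. Then z₃ ∉ F(z₁, z₂). -/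
open OnePoint Set

noncomputable section

lemma aux_upper (p q x y K : ℝ) (hp : 0 ≤ p) (hq : |q| ≤ 1) (hy : 1 ≤ y)
    (hK : K^2 = x^2 + y^2 - 1) (hK0 : 0 ≤ K) :
    (q*x - p*y)*K + (p*x + q*y) ≤ x^2 + y^2 := by
  obtain ⟨hq1, hq2⟩ := abs_le.mp hq
  have hyK : x ≤ K := by nlinarith
  have h8 : 0 ≤ p*(y*K - x) := mul_nonneg hp (by nlinarith)
  have hBC1 : 0 ≤ (K^2+1) - (x*K+y) := by nlinarith [sq_nonneg (K-x), sq_nonneg (y-1)]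
  have hBC2 : 0 ≤ (K^2+1) + (x*K+y) := by nlinarith [sq_nonneg (K+x), sq_nonneg (y-1)]
  have h9 : 0 ≤ (1+q)*((K^2+1) - (x*K+y)) := mul_nonneg (by linarith) hBC1
  have h10 : 0 ≤ (1-q)*((K^2+1) + (x*K+y)) := mul_nonneg (by linarith) hBC2
  nlinarith [h8, h9, h10]


set_option maxHeartbeats 1000000 in
lemma aux_lower (p q r s x y K : ℝ) (hp : 0 ≤ p) (hq : |q| ≤ 1) (hr : 0 ≤ r) (hs : |s| ≤ 1)
    (h1 : 1 ≤ p^2+q^2) (h2 : 1 ≤ r^2+s^2) (h3 : p^2+q^2 ≤ x^2+y^2) (h4 : r^2+s^2 ≤ x^2+y^2)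
    (h5 : (x-p)*(x-r) + (y-q)*(y-s) ≤ 0) (hy : 1 ≤ y)
    (hK : K^2 = x^2+y^2-1) (hK0 : 0 ≤ K) :
    -(x^2+y^2) ≤ (q*x-p*y)*K + (p*x+q*y) := by
  obtain ⟨hq1, hq2⟩ := abs_le.mp hq
  obtain ⟨hs1, hs2⟩ := abs_le.mp hs
  by_cases hard : 0 ≤ q*x - p*y
  · nlinarith [mul_nonneg hard hK0, sq_nonneg (p+x), sq_nonneg (q+y)]
  · push_neg at hard
    by_cases hxp : x ≤ p
    · -- case II
      have hx0 : 0 ≤ x := by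
        by_contra hx; push_neg at hx
        nlinarith [mul_nonneg (by linarith : (0:ℝ) ≤ y - q) (by linarith : (0:ℝ) ≤ y - s),
          mul_pos (by linarith : 0 < p - x) (by linarith : 0 < r - x)]
      have hd : p*(y-1) ≤ x*(1+q) := by
        have hyq : q ≤ y := le_trans hq2 hy
        rcases eq_or_lt_of_le hyq with hqy|hqy
        · have hy1 : y = 1 := le_antisymm (hqy ▸ hq2) hy
          rw [hy1]; nlinarith
        · have E1 : (y-q)*(y-1) ≤ (p-x)*x := by
            nlinarith [mul_nonneg (by linarith : (0:ℝ) ≤ y - q) (by linarith : (0:ℝ) ≤ 1 - s),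
              mul_nonneg (by linarith : (0:ℝ) ≤ p - x) hr]
          have E2 : (p-x)*(p+x) ≤ (y-q)*(y+q) := by nlinarith
          have E3 : (y-q)*((y-1)*(p+x)) ≤ (y-q)*(x*(y+q)) := by
            have t1 := mul_le_mul_of_nonneg_right E1 (by linarith : (0:ℝ) ≤ p+x)
            have t2 := mul_le_mul_of_nonneg_left E2 hx0
            linarith [t1, t2]
          by_contra hcon; push_neg at hcon
          nlinarith [mul_pos (by linarith : 0 < y - q)
            (by linarith : 0 < p*(y-1) - x*(1+q)), E3]
      have hy0 : (0:ℝ) ≤ y := by linarith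
      have hS : 0 ≤ p*x + q*y + (x^2+y^2) := by nlinarith [sq_nonneg (p+x), sq_nonneg (q+y)]
      have hb : 0 ≤ x*(1+q) - p*(y-1) := by linarith
      have hBr : 0 ≤ (x*q + (p*(y-1) - x))*y + 2*x*(p*x + (x^2+y^2)) := by
        nlinarith [mul_nonneg (mul_nonneg hx0 hy0) (by linarith : (0:ℝ) ≤ 1 + q),
          mul_nonneg (mul_nonneg hp hy0) (by linarith : (0:ℝ) ≤ y - 1),
          mul_nonneg (mul_nonneg hx0 hy0) (by linarith : (0:ℝ) ≤ y - 1),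
          mul_nonneg hp (sq_nonneg x), mul_nonneg hx0 (sq_nonneg x)]
      have hsq : (p+x)^2*(x^2+y^2-1) ≤ (p*x + q*y + (x^2+y^2))^2 := by
        rcases eq_or_lt_of_le hx0 with hx1|hx1
        · have hx1' : x = 0 := hx1.symm
          subst hx1'
          have hp0 : p*(y-1) = 0 := le_antisymm (by linarith) (mul_nonneg hp (by linarith))
          rcases mul_eq_zero.mp hp0 with h|h
          · rw [h]; nlinarith [sq_nonneg (q*y + (0^2+y^2))]
          · have hy1 : y = 1 := by linarith
            rw [hy1]; nlinarith [sq_nonneg (p*0 + q*1 + (0^2+1^2))]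
        · by_contra hcon; push_neg at hcon
          have key : x^2*((p*x + q*y + (x^2+y^2))^2 - (p+x)^2*(x^2+y^2-1))
              = (y-1)^2*(p+x)^2*(x^2+y^2)
                + (x*(1+q) - p*(y-1))*(y*((x*q + (p*(y-1) - x))*y + 2*x*(p*x + (x^2+y^2)))) := by
            ring
          have n1 : 0 ≤ (y-1)^2*(p+x)^2*(x^2+y^2) := by positivity
          have n2 : 0 ≤ (x*(1+q) - p*(y-1))*(y*((x*q + (p*(y-1) - x))*y + 2*x*(p*x + (x^2+y^2)))) :=
            mul_nonneg hb (mul_nonneg hy0 hBr)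
          have n3 : 0 < x^2*((p+x)^2*(x^2+y^2-1) - (p*x + q*y + (x^2+y^2))^2) :=
            mul_pos (by positivity) (by linarith)
          linarith [key, n1, n2, n3]
      have hKK : (p+x)^2*K^2 = (p+x)^2*(x^2+y^2-1) := by rw [hK]
      have h7 : (p+x)*K ≤ p*x + q*y + (x^2+y^2) := by
        by_contra hcon; push_neg at hcon
        have hpos : 0 < ((p+x)*K - (p*x+q*y+(x^2+y^2))) * ((p+x)*K + (p*x+q*y+(x^2+y^2))) :=
          mul_pos (by linarith) (by nlinarith [mul_nonneg (by linarith : (0:ℝ) ≤ p+x) hK0])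
        nlinarith [hpos, hsq, hKK, sq_nonneg (p+x)]
      have h6 : (p*y - q*x)*K ≤ (p+x)*K :=
        mul_le_mul_of_nonneg_right (by linarith) hK0
      linarith [h6, h7]
    · -- case I
      push_neg at hxp
      have hxr : x ≤ r := by
        by_contra hc; push_neg at hc
        nlinarith [mul_pos (by linarith : 0 < x - p) (by linarith : 0 < x - r),
          mul_nonneg (by linarith : (0:ℝ) ≤ y - q) (by linarith : (0:ℝ) ≤ y - s)]
      rcases eq_or_lt_of_le (show s ≤ y by linarith) with hsy|hsy
      · have hy1 : y = 1 := le_antisymm (hsy ▸ hs2) hy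
        have hx0 : 0 < x := by linarith
        have hKx : K = x := by
          have h0 : (K-x)*(K+x) = 0 := by rw [hy1] at hK; nlinarith [hK]
          rcases mul_eq_zero.mp h0 with h|h
          · linarith
          · linarith
        rw [hy1, hKx]
        nlinarith [mul_nonneg (by linarith : (0:ℝ) ≤ 1 + q) (sq_nonneg x)]
      · exfalso
        have c2 : (y-q)*(y-s)*(r+x) ≤ (x-p)*(y^2 - s^2) := by
          have t1 := mul_le_mul_of_nonneg_right
            (show (y-q)*(y-s) ≤ (x-p)*(r-x) by linarith [h5]) (show (0:ℝ) ≤ r+x by linarith)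
          have t2 := mul_le_mul_of_nonneg_left
            (show r^2-x^2 ≤ y^2-s^2 by linarith) (show (0:ℝ) ≤ x-p by linarith)
          linarith [t1, t2]
        have c3 : (y-s)*(2*x*(y-q)) ≤ (y-s)*((x-p)*(y+s)) := by
          have t3 := mul_le_mul_of_nonneg_left (show 2*x ≤ r+x by linarith)
            (mul_nonneg (show (0:ℝ) ≤ y-q by linarith) (show (0:ℝ) ≤ y-s by linarith))
          linarith [c2, t3]
        have club : 2*x*(y-q) ≤ (x-p)*(y+1) := by
          have club' : 2*x*(y-q) ≤ (x-p)*(y+s) := by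
            by_contra hc; push_neg at hc
            nlinarith [mul_pos (by linarith : 0 < y - s)
              (by linarith : 0 < 2*x*(y-q) - (x-p)*(y+s)), c3]
          have t4 := mul_le_mul_of_nonneg_left (show s ≤ 1 by linarith)
            (show (0:ℝ) ≤ x-p by linarith)
          linarith [club', t4]
        linarith [club, mul_nonneg (show (0:ℝ) ≤ y-1 by linarith)
          (show (0:ℝ) ≤ x-p by linarith)]

lemma aux_key (p q r s x y K : ℝ) (hp : 0 ≤ p) (hq : |q| ≤ 1) (hr : 0 ≤ r) (hs : |s| ≤ 1)
    (h1 : 1 ≤ p^2+q^2) (h2 : 1 ≤ r^2+s^2) (h3 : p^2+q^2 ≤ x^2+y^2) (h4 : r^2+s^2 ≤ x^2+y^2)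
    (h5 : (x-p)*(x-r) + (y-q)*(y-s) ≤ 0) (hy : 1 ≤ y)
    (hK : K^2 = x^2+y^2-1) (hK0 : 0 ≤ K) :
    |(q*x-p*y)*K + (p*x+q*y)| ≤ x^2+y^2 :=
  abs_le.mpr ⟨by linarith [aux_lower p q r s x y K hp hq hr hs h1 h2 h3 h4 h5 hy hK hK0],
    aux_upper p q x y K hp hq hy hK hK0⟩

set_option maxHeartbeats 1000000 in

set_option maxHeartbeats 1000000 in
theorem largest_not_in_diamDisc (z₁ z₂ z₃ : ℂ)
    (hbig : max (‖z₁‖) (‖z₂‖) ≤ ‖z₃‖)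
    (hcol : ApproxCollinear z₁ z₂)
    (hmin : 1 < min (‖z₁‖) (‖z₂‖))
    (hno : ¬ ∃ a : ℂ, ‖a‖ = 1 ∧
      |(z₁ / a).im| ≤ 1 ∧ |(z₂ / a).im| ≤ 1 ∧ |(z₃ / a).im| ≤ 1) :
    z₃ ∉ DiamDisc z₁ z₂ := by
  intro hmem
  simp only [DiamDisc, Set.mem_setOf_eq] at hmem
  apply hno
  obtain ⟨a, ha, hu, hv⟩ := hcol
  simp only [HalfStrip, Set.mem_setOf_eq] at hu hv
  set p := (z₁/a).re with hp_def
  set q := (z₁/a).im with hq_def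
  set r := (z₂/a).re with hr_def
  set s := (z₂/a).im with hs_def
  set x := (z₃/a).re with hx_def
  set y := (z₃/a).im with hy_def
  have ha0 : a ≠ 0 := by
    intro h; rw [h] at ha; simp at ha
  have habs1 : ‖z₁/a‖ = ‖z₁‖ := by rw [norm_div, ha, div_one]
  have habs2 : ‖z₂/a‖ = ‖z₂‖ := by rw [norm_div, ha, div_one]
  have habs3 : ‖z₃/a‖ = ‖z₃‖ := by rw [norm_div, ha, div_one]
  have e1 : ‖z₁/a‖ ^ 2 = p^2 + q^2 := by
    rw [Complex.sq_norm, Complex.normSq_apply]; ring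
  have e2 : ‖z₂/a‖ ^ 2 = r^2 + s^2 := by
    rw [Complex.sq_norm, Complex.normSq_apply]; ring
  have e3 : ‖z₃/a‖ ^ 2 = x^2 + y^2 := by
    rw [Complex.sq_norm, Complex.normSq_apply]; ring
  have hm1 : 1 < ‖z₁‖ := lt_of_lt_of_le hmin (min_le_left _ _)
  have hm2 : 1 < ‖z₂‖ := lt_of_lt_of_le hmin (min_le_right _ _)
  have hb1 : ‖z₁‖ ≤ ‖z₃‖ := le_trans (le_max_left _ _) hbig
  have hb2 : ‖z₂‖ ≤ ‖z₃‖ := le_trans (le_max_right _ _) hbig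
  have h1 : 1 ≤ p^2 + q^2 := by nlinarith [habs1, e1]
  have h2 : 1 ≤ r^2 + s^2 := by nlinarith [habs2, e2]
  have h3 : p^2 + q^2 ≤ x^2 + y^2 := by
    nlinarith [habs1, habs3, e1, e3, norm_nonneg z₁, norm_nonneg z₃]
  have h4 : r^2 + s^2 ≤ x^2 + y^2 := by
    nlinarith [habs2, habs3, e2, e3, norm_nonneg z₂, norm_nonneg z₃]
  -- disc condition
  have hdisc : ‖(z₃ - (z₁ + z₂)/2)/a‖ ≤ ‖(z₁ - z₂)/a‖/2 := by
    rw [norm_div, norm_div, ha, div_one, div_one]; exact hmem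
  have hw : ‖(z₃/a) + (z₃/a) - (z₁/a) - (z₂/a)‖ ≤ ‖(z₁/a) - (z₂/a)‖ := by
    have e : (z₃ - (z₁ + z₂)/2)/a = ((z₃/a) + (z₃/a) - (z₁/a) - (z₂/a))/2 := by ring
    have e' : (z₁ - z₂)/a = (z₁/a) - (z₂/a) := by ring
    rw [e, e'] at hdisc
    rw [norm_div, Complex.norm_two] at hdisc
    linarith
  have l1 : ‖(z₃/a) + (z₃/a) - (z₁/a) - (z₂/a)‖^2 = (x+x-p-r)^2 + (y+y-q-s)^2 := by
    rw [Complex.sq_norm, Complex.normSq_apply]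
    simp only [Complex.add_re, Complex.add_im, Complex.sub_re, Complex.sub_im]
    ring
  have l2 : ‖(z₁/a) - (z₂/a)‖^2 = (p-r)^2 + (q-s)^2 := by
    rw [Complex.sq_norm, Complex.normSq_apply]
    simp only [Complex.sub_re, Complex.sub_im]
    ring
  have hsq : ‖(z₃/a) + (z₃/a) - (z₁/a) - (z₂/a)‖^2 ≤ ‖(z₁/a) - (z₂/a)‖^2 :=
    pow_le_pow_left₀ (norm_nonneg _) hw 2
  have n1 : (x+x-p-r)^2 + (y+y-q-s)^2 ≤ (p-r)^2 + (q-s)^2 := by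
    rw [← l1, ← l2]; exact hsq
  have h5 : (x-p)*(x-r) + (y-q)*(y-s) ≤ 0 := by linarith [n1, sq_nonneg (x+x-p-r), sq_nonneg (y+y-q-s)]
  clear hmem hdisc hw hsq n1 l1 l2 e1 e2 e3 habs1 habs2 habs3 hm1 hm2 hb1 hb2
  rcases le_or_gt |y| 1 with hy1|hy1
  · exact ⟨a, ha, hu.2, hv.2, hy1⟩
  · have hy2 : 1 < y^2 := by nlinarith [abs_nonneg y, sq_abs y]
    have hT : 1 < x^2 + y^2 := by nlinarith
    have hT0 : (0:ℝ) < x^2 + y^2 := by linarith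
    set K := Real.sqrt (x^2 + y^2 - 1) with hK_def
    have hK0 : 0 ≤ K := Real.sqrt_nonneg _
    have hK : K^2 = x^2 + y^2 - 1 := Real.sq_sqrt (by linarith)
    rcases lt_abs.mp hy1 with hyy|hyy
    · -- y > 1
      set c : ℂ := ⟨(x*K+y)/(x^2+y^2), (y*K-x)/(x^2+y^2)⟩ with hc_def
      have hcre : c.re = (x*K+y)/(x^2+y^2) := rfl
      have hcim : c.im = (y*K-x)/(x^2+y^2) := rfl
      have hnorm : Complex.normSq c = 1 := by
        rw [Complex.normSq_apply, hcre, hcim]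
        field_simp
        linear_combination (x^2+y^2) * hK
      have habsc : ‖c‖ = 1 := by
        rw [Complex.norm_def, hnorm, Real.sqrt_one]
      have key1 := aux_key p q r s x y K hu.1 hu.2 hv.1 hv.2 h1 h2 h3 h4 h5 hyy.le hK hK0
      have key2 := aux_key r s p q x y K hv.1 hv.2 hu.1 hu.2 h2 h1 h4 h3 (by linarith [h5]) hyy.le hK hK0
      refine ⟨a*c, by rw [norm_mul, ha, habsc, one_mul], ?_, ?_, ?_⟩
      · have him : (z₁/(a*c)).im = ((q*x-p*y)*K + (p*x+q*y))/(x^2+y^2) := by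
          rw [div_mul_eq_div_div, Complex.div_im, hnorm, hcre, hcim]
          field_simp
          ring
        rw [him, abs_div, abs_of_pos hT0, div_le_one hT0]
        exact key1
      · have him : (z₂/(a*c)).im = ((s*x-r*y)*K + (r*x+s*y))/(x^2+y^2) := by
          rw [div_mul_eq_div_div, Complex.div_im, hnorm, hcre, hcim]
          field_simp
          ring
        rw [him, abs_div, abs_of_pos hT0, div_le_one hT0]
        exact key2
      · have him : (z₃/(a*c)).im = 1 := by
          rw [div_mul_eq_div_div, Complex.div_im, hnorm, hcre, hcim]
          field_simp
          ring
        rw [him]; norm_num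
    · -- y < -1
      have hyy' : (1:ℝ) ≤ -y := hyy.le
      set c : ℂ := ⟨(x*K-y)/(x^2+y^2), (y*K+x)/(x^2+y^2)⟩ with hc_def
      have hcre : c.re = (x*K-y)/(x^2+y^2) := rfl
      have hcim : c.im = (y*K+x)/(x^2+y^2) := rfl
      have hnorm : Complex.normSq c = 1 := by
        rw [Complex.normSq_apply, hcre, hcim]
        field_simp
        linear_combination (x^2+y^2) * hK
      have habsc : ‖c‖ = 1 := by
        rw [Complex.norm_def, hnorm, Real.sqrt_one]
      have key1 := aux_key p (-q) r (-s) x (-y) K hu.1 (by rw [abs_neg]; exact hu.2) hv.1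
        (by rw [abs_neg]; exact hv.2) (by linarith [h1]) (by linarith [h2]) (by linarith [h3])
        (by linarith [h4]) (by linarith [h5]) hyy' (by linarith [hK]) hK0
      have key2 := aux_key r (-s) p (-q) x (-y) K hv.1 (by rw [abs_neg]; exact hv.2) hu.1
        (by rw [abs_neg]; exact hu.2) (by linarith [h2]) (by linarith [h1]) (by linarith [h4])
        (by linarith [h3]) (by linarith [h5]) hyy' (by linarith [hK]) hK0
      refine ⟨a*c, by rw [norm_mul, ha, habsc, one_mul], ?_, ?_, ?_⟩
      · have him : (z₁/(a*c)).im = -(((-q)*x-p*(-y))*K + (p*x+(-q)*(-y)))/(x^2+y^2) := by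
          rw [div_mul_eq_div_div, Complex.div_im, hnorm, hcre, hcim]
          field_simp
          ring
        rw [him, abs_div, abs_of_pos hT0, div_le_one hT0, abs_neg]
        linarith [key1]
      · have him : (z₂/(a*c)).im = -(((-s)*x-r*(-y))*K + (r*x+(-s)*(-y)))/(x^2+y^2) := by
          rw [div_mul_eq_div_div, Complex.div_im, hnorm, hcre, hcim]
          field_simp
          ring
        rw [him, abs_div, abs_of_pos hT0, div_le_one hT0, abs_neg]
        linarith [key2]
      · have him : (z₃/(a*c)).im = -1 := by
          rw [div_mul_eq_div_div, Complex.div_im, hnorm, hcre, hcim]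
          field_simp
          ring
        rw [him]; norm_num
end
end
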